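/- arXiv:1409.1024 — 3 statements merged into one kernel-verified Lean document; each statement's English description precedes it below -/
import Mathlib

section
/- Let a>0, β>1, β₁,β₂∈ℝ, and suppose f(x) ~ a|x|^β (log(1/|x|))^{β₁} (log log(1/|x|))^{β₂} sgn(x) as x→0. Then with ℓ(x)=(f(x)/x^β)^{-1/(β-1)} for small x>0, one has lim_{x→0⁺} ℓ(xℓ(x))/ℓ(x)=1, and consequently F⁻¹(t) ~ (1/(a(β-1)))^{1/(β-1)} t^{-1/(β-1)} ((1/(β-1))log t)^{-β₁/(β-1)} (log log t)^{-β₂/(β-1)} as t→∞. -/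
open Real Filter MeasureTheory Set Topology

section blocks
variable {α : Type*} {l : Filter α} {p q : α → ℝ}

lemma blockD' (hne : ∀ᶠ x in l, p x ≠ 0)
    (h : Tendsto (fun x => (q x - p x) / p x) l (𝓝 0)) :
    Tendsto (fun x => q x / p x) l (𝓝 1) := by
  have : Tendsto (fun x => (q x - p x) / p x + 1) l (𝓝 (0 + 1)) := h.add tendsto_const_nhds
  rw [zero_add] at this
  refine this.congr' ?_
  filter_upwards [hne] with x hx
  field_simp
  ring

lemma blockD (hp : Tendsto p l atTop)
    (h : Tendsto (fun x => q x - p x) l (𝓝 0)) :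
    Tendsto (fun x => q x / p x) l (𝓝 1) :=
  blockD' ((hp.eventually_gt_atTop 0).mono fun x hx => hx.ne') (h.div_atTop hp)

lemma blockPos (h : Tendsto q l (𝓝 1)) : ∀ᶠ x in l, 0 < q x :=
  h.eventually (lt_mem_nhds one_pos)

lemma blockQPos (hp : ∀ᶠ x in l, 0 < p x)
    (h : Tendsto (fun x => q x / p x) l (𝓝 1)) : ∀ᶠ x in l, 0 < q x := by
  filter_upwards [hp, h.eventually (lt_mem_nhds (by norm_num : (1:ℝ)/2 < 1))] with x hx h2
  have := mul_pos (lt_trans (by norm_num) h2) hx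
  rwa [div_mul_cancel₀] at this
  exact hx.ne'

lemma blockE (hp : ∀ᶠ x in l, 0 < p x)
    (h : Tendsto (fun x => q x / p x) l (𝓝 1)) :
    Tendsto (fun x => Real.log (q x) - Real.log (p x)) l (𝓝 0) := by
  have hq := blockQPos hp h
  have hlog : Tendsto (fun x => Real.log (q x / p x)) l (𝓝 0) := by
    have := (Real.continuousAt_log one_ne_zero).tendsto.comp h
    rw [Real.log_one] at this; exact this
  refine hlog.congr' ?_
  filter_upwards [hp, hq] with x hx hq
  rw [Real.log_div hq.ne' hx.ne']

lemma blockF (hp : Tendsto p l atTop)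
    (h : Tendsto (fun x => q x / p x) l (𝓝 1)) :
    Tendsto (fun x => Real.log (q x) / Real.log (p x)) l (𝓝 1) :=
  blockD (Real.tendsto_log_atTop.comp hp) (blockE (hp.eventually_gt_atTop 0) h)

lemma blockH (hp : ∀ᶠ x in l, 0 < p x)
    (h : Tendsto (fun x => q x / p x) l (𝓝 1)) (r : ℝ) :
    Tendsto (fun x => q x ^ r / p x ^ r) l (𝓝 1) := by
  have hq := blockQPos hp h
  have h1 : Tendsto (fun x => (q x / p x) ^ r) l (𝓝 1) := by
    have := (Real.continuousAt_rpow_const 1 r (Or.inl one_ne_zero)).tendsto.comp h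
    rw [Real.one_rpow] at this; exact this
  refine h1.congr' ?_
  filter_upwards [hp, hq] with x hx hqx
  rw [Real.div_rpow hqx.le hx.le]

lemma blockMul {u v : α → ℝ} (hu : Tendsto u l (𝓝 1)) (hv : Tendsto v l (𝓝 1)) :
    Tendsto (fun x => u x * v x) l (𝓝 1) := by
  have := hu.mul hv; simpa using this

end blocks

noncomputable def L0 (β₁ β₂ x : ℝ) : ℝ :=
  (Real.log (1/x)) ^ β₁ * (Real.log (Real.log (1/x))) ^ β₂

lemma F1 : Tendsto (fun x : ℝ => Real.log (1/x)) (𝓝[>] 0) atTop := by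
  have h := Real.tendsto_log_nhdsGT_zero
  have := tendsto_neg_atBot_atTop.comp h
  refine this.congr fun x => ?_
  simp [Real.log_inv, Function.comp]

lemma F2 : Tendsto (fun x : ℝ => Real.log (Real.log (1/x))) (𝓝[>] 0) atTop :=
  Real.tendsto_log_atTop.comp F1

lemma L0_pos (β₁ β₂ : ℝ) : ∀ᶠ x in 𝓝[>] (0:ℝ), 0 < L0 β₁ β₂ x := by
  filter_upwards [F1.eventually_gt_atTop 1, F2.eventually_gt_atTop 1] with x h1 h2
  exact mul_pos (Real.rpow_pos_of_pos (lt_trans one_pos h1) _)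
    (Real.rpow_pos_of_pos (lt_trans one_pos h2) _)

lemma log_L0 (β₁ β₂ : ℝ) : ∀ᶠ x in 𝓝[>] (0:ℝ),
    Real.log (L0 β₁ β₂ x) =
      β₁ * Real.log (Real.log (1/x)) + β₂ * Real.log (Real.log (Real.log (1/x))) := by
  filter_upwards [F1.eventually_gt_atTop 1, F2.eventually_gt_atTop 1] with x h1 h2
  have p1 : (0:ℝ) < Real.log (1/x) := lt_trans one_pos h1
  have p2 : (0:ℝ) < Real.log (Real.log (1/x)) := lt_trans one_pos h2
  rw [L0, Real.log_mul (Real.rpow_pos_of_pos p1 _).ne' (Real.rpow_pos_of_pos p2 _).ne',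
    Real.log_rpow p1, Real.log_rpow p2]

lemma loglog_div_log : Tendsto (fun x : ℝ => Real.log (Real.log (1/x)) / Real.log (1/x))
    (𝓝[>] 0) (𝓝 0) :=
  (Real.isLittleO_log_id_atTop.tendsto_div_nhds_zero).comp F1

lemma llog_div_llog : Tendsto (fun x : ℝ =>
    Real.log (Real.log (Real.log (1/x))) / Real.log (Real.log (1/x))) (𝓝[>] 0) (𝓝 0) :=
  (Real.isLittleO_log_id_atTop.tendsto_div_nhds_zero).comp F2

lemma logL0_div_log (β₁ β₂ : ℝ) :
    Tendsto (fun x => Real.log (L0 β₁ β₂ x) / Real.log (1/x)) (𝓝[>] 0) (𝓝 0) := by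
  have h3 : Tendsto (fun x : ℝ => Real.log (Real.log (Real.log (1/x))) / Real.log (1/x))
      (𝓝[>] 0) (𝓝 0) := by
    have := llog_div_llog.mul loglog_div_log
    rw [mul_zero] at this
    refine this.congr' ?_
    filter_upwards [F1.eventually_gt_atTop 1, F2.eventually_gt_atTop 1] with x h1 h2
    rw [div_mul_div_comm, div_eq_div_iff (by positivity) (by positivity)]
    ring
  have := (loglog_div_log.const_mul β₁).add (h3.const_mul β₂)
  simp only [mul_zero, add_zero] at this
  refine this.congr' ?_
  filter_upwards [log_L0 β₁ β₂] with x hx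
  rw [hx, add_div, mul_div_assoc, mul_div_assoc]

lemma lll_div_log :
    Tendsto (fun x : ℝ => Real.log (Real.log (Real.log (1/x))) / Real.log (1/x))
      (𝓝[>] 0) (𝓝 0) := by
  have := llog_div_llog.mul loglog_div_log
  rw [mul_zero] at this
  refine this.congr' ?_
  filter_upwards [F1.eventually_gt_atTop 1, F2.eventually_gt_atTop 1] with x h1 h2
  rw [div_mul_div_comm, div_eq_div_iff (by positivity) (by positivity)]
  ring

set_option maxHeartbeats 2000000 in
/-- For `f(x) ~ a|x|^β (log(1/|x|))^{β₁} (loglog(1/|x|))^{β₂} sgn(x)`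
as `x → 0`, the function `ℓ(x) = (f(x)/x^β)^{-1/(β-1)}` satisfies
`ℓ(xℓ(x))/ℓ(x) → 1` as `x → 0⁺`, and consequently
`F⁻¹(t) ~ (1/(a(β-1)))^{1/(β-1)} t^{-1/(β-1)} ((1/(β-1)) log t)^{-β₁/(β-1)}
(loglog t)^{-β₂/(β-1)}` as `t → ∞`. -/
theorem stmt16 (f Finv ℓ : ℝ → ℝ) (a β β₁ β₂ : ℝ) (ha : 0 < a) (hβ : 1 < β)
    (hfc : ContinuousOn f (Ioi 0)) (hfpos : ∀ x > 0, 0 < f x)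
    (hasym : Tendsto (fun x => f x /
        (a * |x| ^ β * (Real.log (1 / |x|)) ^ β₁ *
          (Real.log (Real.log (1 / |x|))) ^ β₂ * Real.sign x))
      (𝓝[≠] 0) (𝓝 1))
    (hℓ : ∀ x > 0, ℓ x = (f x / x ^ β) ^ (-(1 / (β - 1))))
    (hFinv_pos : ∀ᶠ t in atTop, 0 < Finv t)
    (hFinv : ∀ᶠ t in atTop, (∫ u in Finv t..1, 1 / f u) = t)
    (hFinv0 : Tendsto Finv atTop (𝓝 0)) :
    Tendsto (fun x => ℓ (x * ℓ x) / ℓ x) (𝓝[>] 0) (𝓝 1) ∧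
    Tendsto (fun t => Finv t /
        ((1 / (a * (β - 1))) ^ (1 / (β - 1)) * t ^ (-(1 / (β - 1))) *
          ((1 / (β - 1)) * Real.log t) ^ (-(β₁ / (β - 1))) *
          (Real.log (Real.log t)) ^ (-(β₂ / (β - 1))))) atTop (𝓝 1) := by
  set c : ℝ := 1 / (β - 1) with hc
  have hβ0 : (0:ℝ) < β - 1 := by linarith
  have hcpos : 0 < c := by positivity
  set Q : ℝ → ℝ := fun x => f x / (a * x ^ β * L0 β₁ β₂ x) with hQ
  -- Q → 1 on 𝓝[>]0
  have hmono : 𝓝[>] (0:ℝ) ≤ 𝓝[≠] (0:ℝ) :=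
    nhdsWithin_mono _ fun x hx => ne_of_gt hx
  have hq : Tendsto Q (𝓝[>] 0) (𝓝 1) := by
    refine ((hasym.mono_left hmono).congr' ?_)
    filter_upwards [self_mem_nhdsWithin] with x (hx : 0 < x)
    rw [abs_of_pos hx, Real.sign_of_pos hx, hQ]
    simp only [L0]
    ring_nf
  have hx_pos : ∀ᶠ x in 𝓝[>] (0:ℝ), 0 < x := self_mem_nhdsWithin
  have hqpos : ∀ᶠ x in 𝓝[>] (0:ℝ), 0 < Q x := blockPos hq
  -- ℓ x = (a * L0 x * Q x) ^ (-c) eventually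
  have hℓeq : ∀ᶠ x in 𝓝[>] (0:ℝ), ℓ x = (a * L0 β₁ β₂ x * Q x) ^ (-c) := by
    filter_upwards [hx_pos, L0_pos β₁ β₂] with x hx hL
    rw [hℓ x hx]
    congr 1
    rw [hQ]
    have hxβ : (0:ℝ) < x ^ β := Real.rpow_pos_of_pos hx β
    field_simp
  have hbase_pos : ∀ᶠ x in 𝓝[>] (0:ℝ), 0 < a * L0 β₁ β₂ x * Q x := by
    filter_upwards [L0_pos β₁ β₂, hqpos] with x h1 h2
    positivity
  have hℓpos : ∀ᶠ x in 𝓝[>] (0:ℝ), 0 < ℓ x := by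
    filter_upwards [hℓeq, hbase_pos] with x h1 h2
    rw [h1]; exact Real.rpow_pos_of_pos h2 _
  -- log ℓ / log (1/x) → 0
  have hlogq : Tendsto (fun x => Real.log (Q x)) (𝓝[>] 0) (𝓝 0) := by
    have := (Real.continuousAt_log one_ne_zero).tendsto.comp hq
    rw [Real.log_one] at this; exact this
  have hlogℓ : ∀ᶠ x in 𝓝[>] (0:ℝ),
      Real.log (ℓ x) = (- c) * (Real.log a + Real.log (L0 β₁ β₂ x) + Real.log (Q x)) := by
    filter_upwards [hℓeq, L0_pos β₁ β₂, hqpos] with x h1 h2 h3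
    rw [h1, Real.log_rpow (by positivity), Real.log_mul (by positivity) h3.ne',
      Real.log_mul ha.ne' h2.ne']
  have hF7 : Tendsto (fun x => Real.log (ℓ x) / Real.log (1/x)) (𝓝[>] 0) (𝓝 0) := by
    have h1 : Tendsto (fun x : ℝ => Real.log a / Real.log (1/x)) (𝓝[>] 0) (𝓝 0) :=
      tendsto_const_nhds.div_atTop F1
    have h2 := logL0_div_log β₁ β₂
    have h3 : Tendsto (fun x => Real.log (Q x) / Real.log (1/x)) (𝓝[>] 0) (𝓝 0) :=
      hlogq.div_atTop F1
    have := (((h1.add h2).add h3).const_mul (-c))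
    rw [add_zero, add_zero, mul_zero] at this
    refine this.congr' ?_
    filter_upwards [hlogℓ] with x hx
    rw [hx]; ring
  -- x * ℓ x → 0⁺
  have hF8 : Tendsto (fun x => x * ℓ x) (𝓝[>] 0) (𝓝[>] 0) := by
    rw [tendsto_nhdsWithin_iff]
    constructor
    · have hlim : Tendsto (fun x => Real.log x + Real.log (ℓ x)) (𝓝[>] 0) atBot := by
        have h1 : Tendsto (fun x => Real.log (1/x) * (1 - Real.log (ℓ x) / Real.log (1/x)))
            (𝓝[>] 0) atTop := by
          have h2 : Tendsto (fun x => 1 - Real.log (ℓ x) / Real.log (1/x)) (𝓝[>] 0) (𝓝 1) := by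
            have := (tendsto_const_nhds (x := (1:ℝ))).sub hF7
            rwa [sub_zero] at this
          exact Filter.Tendsto.atTop_mul_pos one_pos F1 h2
        have := tendsto_neg_atTop_atBot.comp h1
        refine this.congr' ?_
        filter_upwards [F1.eventually_gt_atTop 1, hx_pos] with x hgt hx
        simp only [Function.comp]
        have hne : Real.log (1/x) ≠ 0 := by positivity
        have : Real.log (1/x) = - Real.log x := by rw [one_div, Real.log_inv]
        field_simp
        linarith [this]
      have := Real.tendsto_exp_atBot.comp hlim
      refine this.congr' ?_
      filter_upwards [hx_pos, hℓpos] with x hx hl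
      simp only [Function.comp]
      rw [Real.exp_add, Real.exp_log hx, Real.exp_log hl]
    · filter_upwards [hx_pos, hℓpos] with x hx hl
      exact mul_pos hx hl
  -- ratio of logs: log(1/(xℓx)) / log(1/x) → 1
  have hR : Tendsto (fun x => Real.log (1/(x * ℓ x)) / Real.log (1/x)) (𝓝[>] 0) (𝓝 1) := by
    refine blockD' ?_ ?_
    · filter_upwards [F1.eventually_gt_atTop 1] with x hx
      positivity
    · have := hF7.neg
      rw [neg_zero] at this
      refine this.congr' ?_
      filter_upwards [hx_pos, hℓpos] with x hx hl
      congr 1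
      rw [one_div (x * ℓ x), Real.log_inv, Real.log_mul hx.ne' hl.ne', one_div, Real.log_inv]
      ring
  -- L0(xℓx)/L0 x → 1
  have hL0pos := L0_pos β₁ β₂
  have hL0rat : Tendsto (fun x => L0 β₁ β₂ (x * ℓ x) / L0 β₁ β₂ x) (𝓝[>] 0) (𝓝 1) := by
    have h1 := blockH (F1.eventually_gt_atTop 0) hR β₁
    have h2 := blockH ((Real.tendsto_log_atTop.comp F1).eventually_gt_atTop 0) (blockF F1 hR) β₂
    have := blockMul h1 h2
    refine this.congr' ?_
    filter_upwards [hL0pos, hF8.eventually hL0pos, F1.eventually_gt_atTop 1,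
      F2.eventually_gt_atTop 1] with x hx h2 h3 h4
    simp only [L0, Function.comp]
    rw [div_mul_div_comm]
  -- Q ratio → 1
  have hQrat : Tendsto (fun x => Q (x * ℓ x) / Q x) (𝓝[>] 0) (𝓝 1) := by
    have := (hq.comp hF8).div hq one_ne_zero
    rw [div_one] at this; exact this
  -- combine
  have hnumden : Tendsto (fun x =>
      (a * L0 β₁ β₂ (x * ℓ x) * Q (x * ℓ x)) / (a * L0 β₁ β₂ x * Q x)) (𝓝[>] 0) (𝓝 1) := by
    have := blockMul hL0rat hQrat
    refine this.congr' ?_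
    filter_upwards [hL0pos, hqpos] with x h1 h2
    field_simp
  have part1 : Tendsto (fun x => ℓ (x * ℓ x) / ℓ x) (𝓝[>] 0) (𝓝 1) := by
    have := blockH hbase_pos hnumden (-c)
    refine this.congr' ?_
    filter_upwards [hℓeq, hF8.eventually hℓeq] with x h1 h2
    rw [h2, h1]
  refine ⟨part1, ?_⟩
  clear hR hL0rat hQrat hnumden part1 hF8 hlogℓ hF7
  -- ===== Part 2 =====
  set K : ℝ := a * (β - 1) with hK
  have hKpos : 0 < K := by positivity
  set G : ℝ → ℝ := fun x => K⁻¹ * x ^ (1 - β) * (Real.log (1/x)) ^ (-β₁) *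
      (Real.log (Real.log (1/x))) ^ (-β₂) with hG
  set m : ℝ → ℝ := fun x => x ^ (-β) * (a * L0 β₁ β₂ x)⁻¹ with hm
  set w : ℝ → ℝ := fun x => 1 - c * (β₁ / Real.log (1/x) +
      β₂ / (Real.log (1/x) * Real.log (Real.log (1/x)))) with hw
  have hwlim : Tendsto w (𝓝[>] 0) (𝓝 1) := by
    have h1 : Tendsto (fun x : ℝ => β₁ / Real.log (1/x)) (𝓝[>] 0) (𝓝 0) :=
      tendsto_const_nhds.div_atTop F1
    have h2 : Tendsto (fun x : ℝ => β₂ / (Real.log (1/x) * Real.log (Real.log (1/x))))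
        (𝓝[>] 0) (𝓝 0) :=
      tendsto_const_nhds.div_atTop (F1.atTop_mul_atTop₀ F2)
    have := ((h1.add h2).const_mul c).neg.add_const 1
    simp only [add_zero, mul_zero, neg_zero, zero_add] at this
    refine this.congr fun x => ?_
    rw [hw]; ring
  have hwpos : ∀ᶠ x in 𝓝[>] (0:ℝ), 0 < w x := blockPos hwlim
  have hmpos : ∀ᶠ x in 𝓝[>] (0:ℝ), 0 < m x := by
    filter_upwards [hx_pos, L0_pos β₁ β₂] with x hx hL
    rw [hm]
    have := Real.rpow_pos_of_pos hx (-β)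
    positivity
  have hGderiv : ∀ᶠ x in 𝓝[>] (0:ℝ), HasDerivAt G (-(m x * w x)) x := by
    filter_upwards [hx_pos, F1.eventually_gt_atTop 1, F2.eventually_gt_atTop 1] with x hx hu hv
    have hu0 : (0:ℝ) < Real.log (1/x) := lt_trans one_pos hu
    have hv0 : (0:ℝ) < Real.log (Real.log (1/x)) := lt_trans one_pos hv
    have d1 : HasDerivAt (fun y : ℝ => y ^ (1-β)) ((1-β) * x ^ (1-β-1)) x :=
      Real.hasDerivAt_rpow_const (Or.inl hx.ne')
    have d0 : HasDerivAt (fun y : ℝ => K⁻¹ * y ^ (1-β)) (K⁻¹ * ((1-β) * x ^ (1-β-1))) x :=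
      d1.const_mul K⁻¹
    have d2 : HasDerivAt (fun y : ℝ => Real.log (1/y)) (-x⁻¹) x := by
      have h := (Real.hasDerivAt_log hx.ne').neg
      have he : (fun y : ℝ => Real.log (1/y)) = fun y => -Real.log y := by
        funext y; rw [one_div, Real.log_inv]
      rw [he]; exact h
    have d3 : HasDerivAt (fun y : ℝ => Real.log (1/y) ^ (-β₁))
        (-x⁻¹ * (-β₁) * Real.log (1/x) ^ (-β₁ - 1)) x := d2.rpow_const (Or.inl hu0.ne')
    have d4 : HasDerivAt (fun y : ℝ => Real.log (Real.log (1/y)))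
        (-x⁻¹ / Real.log (1/x)) x := d2.log hu0.ne'
    have d5 : HasDerivAt (fun y : ℝ => Real.log (Real.log (1/y)) ^ (-β₂))
        ((-x⁻¹ / Real.log (1/x)) * (-β₂) * Real.log (Real.log (1/x)) ^ (-β₂ - 1)) x :=
      d4.rpow_const (Or.inl hv0.ne')
    have d6 := (d0.mul d3).mul d5
    have heq : -(m x * w x) =
        ((K⁻¹ * ((1-β) * x ^ (1-β-1))) * Real.log (1/x) ^ (-β₁) +
          (K⁻¹ * x ^ (1-β)) * (-x⁻¹ * (-β₁) * Real.log (1/x) ^ (-β₁ - 1))) *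
            Real.log (Real.log (1/x)) ^ (-β₂) +
          ((K⁻¹ * x ^ (1-β)) * Real.log (1/x) ^ (-β₁)) *
            ((-x⁻¹ / Real.log (1/x)) * (-β₂) * Real.log (Real.log (1/x)) ^ (-β₂ - 1)) := by
      have e1 : x ^ (1-β-1) = x ^ (1-β) * x⁻¹ := by
        rw [show (1-β-1 : ℝ) = (1-β) + (-1) by ring, Real.rpow_add hx, Real.rpow_neg_one]
      have e1' : x ^ (-β) = x ^ (1-β) * x⁻¹ := by
        rw [show (-β : ℝ) = (1-β) + (-1) by ring, Real.rpow_add hx, Real.rpow_neg_one]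
      have e2 : Real.log (1/x) ^ (-β₁ - 1) = Real.log (1/x) ^ (-β₁) * (Real.log (1/x))⁻¹ := by
        rw [show (-β₁ - 1 : ℝ) = (-β₁) + (-1) by ring, Real.rpow_add hu0, Real.rpow_neg_one]
      have e3 : Real.log (Real.log (1/x)) ^ (-β₂ - 1) =
          Real.log (Real.log (1/x)) ^ (-β₂) * (Real.log (Real.log (1/x)))⁻¹ := by
        rw [show (-β₂ - 1 : ℝ) = (-β₂) + (-1) by ring, Real.rpow_add hv0, Real.rpow_neg_one]
      have e4 : Real.log (1/x) ^ (-β₁) = ((Real.log (1/x)) ^ β₁)⁻¹ := by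
        rw [Real.rpow_neg hu0.le]
      have e5 : Real.log (Real.log (1/x)) ^ (-β₂) = ((Real.log (Real.log (1/x))) ^ β₂)⁻¹ := by
        rw [Real.rpow_neg hv0.le]
      have hU : (0:ℝ) < (Real.log (1/x)) ^ β₁ := Real.rpow_pos_of_pos hu0 _
      have hV : (0:ℝ) < (Real.log (Real.log (1/x))) ^ β₂ := Real.rpow_pos_of_pos hv0 _
      have hX : (0:ℝ) < x ^ (1-β) := Real.rpow_pos_of_pos hx _
      rw [hm, hw, hc, hK]
      simp only [L0]
      rw [e1, e1', e2, e3, e4, e5]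
      have hβne : β - 1 ≠ 0 := hβ0.ne'
      field_simp
      ring
    rw [heq]
    exact d6
  have hGpos : ∀ᶠ x in 𝓝[>] (0:ℝ), 0 < G x := by
    filter_upwards [hx_pos, F1.eventually_gt_atTop 1, F2.eventually_gt_atTop 1] with x hx hu hv
    have hu0 : (0:ℝ) < Real.log (1/x) := lt_trans one_pos hu
    have hv0 : (0:ℝ) < Real.log (Real.log (1/x)) := lt_trans one_pos hv
    rw [hG]
    have h1 := Real.rpow_pos_of_pos hx (1-β)
    have h2 := Real.rpow_pos_of_pos hu0 (-β₁)
    have h3 := Real.rpow_pos_of_pos hv0 (-β₂)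
    positivity
  have hlogG : ∀ᶠ x in 𝓝[>] (0:ℝ), Real.log (G x) =
      Real.log (1/x) * ((β - 1) + (-Real.log K - β₁ * Real.log (Real.log (1/x))
        - β₂ * Real.log (Real.log (Real.log (1/x)))) / Real.log (1/x)) := by
    filter_upwards [hx_pos, F1.eventually_gt_atTop 1, F2.eventually_gt_atTop 1] with x hx hu hv
    have hu0 : (0:ℝ) < Real.log (1/x) := lt_trans one_pos hu
    have hv0 : (0:ℝ) < Real.log (Real.log (1/x)) := lt_trans one_pos hv
    have hne : Real.log (1/x) ≠ 0 := hu0.ne'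
    have h' : Real.log (1/x) = -Real.log x := by rw [one_div, Real.log_inv]
    rw [hG]
    rw [Real.log_mul (by positivity) (Real.rpow_pos_of_pos hv0 _).ne',
      Real.log_mul (by positivity) (Real.rpow_pos_of_pos hu0 _).ne',
      Real.log_mul (by positivity) (Real.rpow_pos_of_pos hx _).ne',
      Real.log_rpow hx, Real.log_rpow hu0, Real.log_rpow hv0,
      mul_add, mul_div_cancel₀ _ hne]
    linear_combination Real.log_inv K + (-(β-1)) * h'
  have hfac : Tendsto (fun x => (β - 1) + (-Real.log K - β₁ * Real.log (Real.log (1/x))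
      - β₂ * Real.log (Real.log (Real.log (1/x)))) / Real.log (1/x)) (𝓝[>] (0:ℝ))
      (𝓝 (β - 1)) := by
    have h1 : Tendsto (fun x : ℝ => -Real.log K / Real.log (1/x)) (𝓝[>] 0) (𝓝 0) :=
      tendsto_const_nhds.div_atTop F1
    have h2 := (loglog_div_log.const_mul β₁).neg
    have h3 := (lll_div_log.const_mul β₂).neg
    have := ((h1.add h2).add h3).const_add (β - 1)
    simp only [mul_zero, neg_zero, add_zero] at this
    refine this.congr fun x => ?_
    ring
  have hGtop : Tendsto G (𝓝[>] 0) atTop := by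
    have hlim : Tendsto (fun x => Real.log (G x)) (𝓝[>] (0:ℝ)) atTop := by
      have := Filter.Tendsto.atTop_mul_pos hβ0 F1 hfac
      exact this.congr' (hlogG.mono fun x hx => hx.symm)
    have := Real.tendsto_exp_atTop.comp hlim
    refine this.congr' ?_
    filter_upwards [hGpos] with x hx
    simp only [Function.comp]
    rw [Real.exp_log hx]
  have hfrec : Tendsto (fun x => (1 / f x) / (m x * w x)) (𝓝[>] 0) (𝓝 1) := by
    have h1 : Tendsto (fun x => (Q x)⁻¹ * (w x)⁻¹) (𝓝[>] 0) (𝓝 1) := by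
      have := (hq.inv₀ one_ne_zero).mul (hwlim.inv₀ one_ne_zero); simpa using this
    refine h1.congr' ?_
    filter_upwards [hx_pos, L0_pos β₁ β₂, hwpos] with x hx hL hw0
    have hfx := hfpos x hx
    have hxβ : (0:ℝ) < x ^ β := Real.rpow_pos_of_pos hx β
    have hxβ' : x ^ (-β) = (x ^ β)⁻¹ := Real.rpow_neg hx.le β
    simp only [hQ, hm]
    rw [hxβ']
    field_simp
  have hmwca : ∀ᶠ x in 𝓝[>] (0:ℝ), ContinuousAt (fun y => m y * w y) x := by
    filter_upwards [hx_pos, F1.eventually_gt_atTop 1, F2.eventually_gt_atTop 1] with x hx hu hv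
    have hu0 : (0:ℝ) < Real.log (1/x) := lt_trans one_pos hu
    have hv0 : (0:ℝ) < Real.log (Real.log (1/x)) := lt_trans one_pos hv
    have h0 : ContinuousAt (fun y : ℝ => 1/y) x := continuousAt_const.div continuousAt_id hx.ne'
    have cu : ContinuousAt (fun y : ℝ => Real.log (1/y)) x := h0.log (by positivity)
    have cv : ContinuousAt (fun y : ℝ => Real.log (Real.log (1/y))) x := cu.log hu0.ne'
    have c3 : ContinuousAt (fun y : ℝ => Real.log (1/y) ^ β₁) x :=
      cu.rpow_const (Or.inl hu0.ne')
    have c4 : ContinuousAt (fun y : ℝ => Real.log (Real.log (1/y)) ^ β₂) x :=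
      cv.rpow_const (Or.inl hv0.ne')
    have cm : ContinuousAt m x := by
      rw [hm]
      apply ContinuousAt.mul
      · exact Real.continuousAt_rpow_const _ _ (Or.inl hx.ne')
      · apply ContinuousAt.inv₀
        · exact continuousAt_const.mul (c3.mul c4)
        · have h1 := Real.rpow_pos_of_pos hu0 β₁
          have h2 := Real.rpow_pos_of_pos hv0 β₂
          exact (mul_pos ha (mul_pos h1 h2)).ne'
    have cw : ContinuousAt w x := by
      rw [hw]
      apply continuousAt_const.sub
      apply ContinuousAt.mul continuousAt_const
      apply ContinuousAt.add
      · exact continuousAt_const.div cu hu0.ne'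
      · exact continuousAt_const.div (cu.mul cv) (by positivity)
    exact cm.mul cw
  have key : ∀ ε : ℝ, 0 < ε → ε < 1 → ∃ δ C, 0 < δ ∧
      ∀ x ∈ Ioo (0:ℝ) δ,
        ((1-ε) * (G x - G δ) + C ≤ ∫ u in x..(1:ℝ), 1/f u) ∧
        ((∫ u in x..(1:ℝ), 1/f u) ≤ (1+ε) * (G x - G δ) + C) := by
    intro ε hε hε1
    have hev : ∀ᶠ x in 𝓝[>] (0:ℝ), 0 < x ∧ HasDerivAt G (-(m x * w x)) x ∧
        (1-ε) * (m x * w x) ≤ 1/f x ∧ 1/f x ≤ (1+ε) * (m x * w x) ∧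
        ContinuousAt (fun y => m y * w y) x := by
      have hband := hfrec.eventually
        (Ioo_mem_nhds (by linarith : 1-ε < 1) (by linarith : (1:ℝ) < 1+ε))
      filter_upwards [hx_pos, hGderiv, hmpos, hwpos, hband, hmwca] with x h1 h2 h3 h4 h5 h6
      have hmw : 0 < m x * w x := mul_pos h3 h4
      refine ⟨h1, h2, ?_, ?_, h6⟩
      · have h7 := h5.1
        calc (1-ε) * (m x * w x) ≤ ((1/f x)/(m x * w x)) * (m x * w x) :=
              mul_le_mul_of_nonneg_right h7.le hmw.le
          _ = 1/f x := div_mul_cancel₀ _ hmw.ne'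
      · have h7 := h5.2
        calc 1/f x = ((1/f x)/(m x * w x)) * (m x * w x) := (div_mul_cancel₀ _ hmw.ne').symm
          _ ≤ (1+ε) * (m x * w x) := mul_le_mul_of_nonneg_right h7.le hmw.le
    obtain ⟨u₀, hu₀, hsub⟩ := mem_nhdsGT_iff_exists_Ioo_subset.1 hev
    have hu₀0 : (0:ℝ) < u₀ := hu₀
    set δ : ℝ := min u₀ 1 / 2 with hδdef
    have hδ0 : 0 < δ := by
      have : 0 < min u₀ 1 := lt_min hu₀0 one_pos
      positivity
    have hδu : δ < u₀ := by
      have h1 : min u₀ 1 ≤ u₀ := min_le_left _ _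
      have : δ ≤ u₀ / 2 := by rw [hδdef]; linarith
      linarith
    have hδ1 : δ ≤ 1/2 := by
      have h1 : min u₀ 1 ≤ 1 := min_le_right _ _
      rw [hδdef]; linarith
    have hP : ∀ y ∈ Ioc (0:ℝ) δ, 0 < y ∧ HasDerivAt G (-(m y * w y)) y ∧
        (1-ε) * (m y * w y) ≤ 1/f y ∧ 1/f y ≤ (1+ε) * (m y * w y) ∧
        ContinuousAt (fun z => m z * w z) y :=
      fun y hy => hsub ⟨hy.1, lt_of_le_of_lt hy.2 hδu⟩
    refine ⟨δ, ∫ u in δ..(1:ℝ), 1/f u, hδ0, ?_⟩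
    intro x hx
    have hxδ : x ≤ δ := hx.2.le
    have huIcc : uIcc x δ = Icc x δ := uIcc_of_le hxδ
    have hPIcc : ∀ y ∈ Icc x δ, 0 < y ∧ HasDerivAt G (-(m y * w y)) y ∧
        (1-ε) * (m y * w y) ≤ 1/f y ∧ 1/f y ≤ (1+ε) * (m y * w y) ∧
        ContinuousAt (fun z => m z * w z) y :=
      fun y hy => hP y ⟨lt_of_lt_of_le hx.1 hy.1, hy.2⟩
    have hmwInt : IntervalIntegrable (fun u => m u * w u) volume x δ := by
      apply ContinuousOn.intervalIntegrable
      rw [huIcc]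
      exact fun y hy => ((hPIcc y hy).2.2.2.2).continuousWithinAt
    have hfInt : IntervalIntegrable (fun u => 1/f u) volume x δ := by
      apply ContinuousOn.intervalIntegrable
      rw [huIcc]
      apply ContinuousOn.div continuousOn_const
        (hfc.mono (fun y hy => lt_of_lt_of_le hx.1 hy.1))
      exact fun y hy => (hfpos y (lt_of_lt_of_le hx.1 hy.1)).ne'
    have hfInt1 : IntervalIntegrable (fun u => 1/f u) volume δ (1:ℝ) := by
      apply ContinuousOn.intervalIntegrable
      have h2 : uIcc δ (1:ℝ) = Icc δ 1 := uIcc_of_le (by linarith)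
      rw [h2]
      apply ContinuousOn.div continuousOn_const
        (hfc.mono (fun y hy => lt_of_lt_of_le hδ0 hy.1))
      exact fun y hy => (hfpos y (lt_of_lt_of_le hδ0 hy.1)).ne'
    have hftc : (∫ u in x..δ, m u * w u) = G x - G δ := by
      have h := intervalIntegral.integral_eq_sub_of_hasDerivAt
        (f := G) (f' := fun u => -(m u * w u))
        (fun y hy => (hPIcc y (huIcc ▸ hy)).2.1) hmwInt.neg
      rw [intervalIntegral.integral_neg] at h
      linarith [h]
    have hmono1 : (∫ u in x..δ, (1-ε) * (m u * w u)) ≤ ∫ u in x..δ, 1/f u :=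
      intervalIntegral.integral_mono_on hxδ (hmwInt.const_mul _) hfInt
        (fun y hy => (hPIcc y hy).2.2.1)
    have hmono2 : (∫ u in x..δ, 1/f u) ≤ ∫ u in x..δ, (1+ε) * (m u * w u) :=
      intervalIntegral.integral_mono_on hxδ hfInt (hmwInt.const_mul _)
        (fun y hy => (hPIcc y hy).2.2.2.1)
    rw [intervalIntegral.integral_const_mul, hftc] at hmono1 hmono2
    have hsplit : (∫ u in x..(1:ℝ), 1/f u) = (∫ u in x..δ, 1/f u) + ∫ u in δ..1, 1/f u :=
      (intervalIntegral.integral_add_adjacent_intervals hfInt hfInt1).symm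
    rw [hsplit]
    exact ⟨by linarith, by linarith⟩
  have HFG : Tendsto (fun x => (∫ u in x..(1:ℝ), 1/f u) / G x) (𝓝[>] 0) (𝓝 1) := by
    rw [Metric.tendsto_nhds]
    intro ε hε
    set ε₁ : ℝ := min (ε/2) (1/2) with hε₁def
    have hε₁0 : 0 < ε₁ := lt_min (by linarith) (by norm_num)
    have hε₁a : ε₁ ≤ ε/2 := min_le_left _ _
    have hε₁b : ε₁ ≤ 1/2 := min_le_right _ _
    obtain ⟨δ, C, hδ0, hbd⟩ := key ε₁ hε₁0 (by linarith)
    have hIoo : Ioo (0:ℝ) δ ∈ 𝓝[>] (0:ℝ) := Ioo_mem_nhdsGT hδ0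
    filter_upwards [hIoo, hGtop.eventually_gt_atTop 0,
      hGtop.eventually_gt_atTop (2*(|C| + 2*|G δ|)/ε)] with x hx hG0 hGM
    have hb := hbd x hx
    have hCb : |C| + 2*|G δ| < ε/2 * G x := by
      rw [div_lt_iff₀ hε] at hGM
      linarith
    rw [Real.dist_eq]
    have heqd : (∫ u in x..(1:ℝ), 1/f u) / G x - 1 =
        ((∫ u in x..(1:ℝ), 1/f u) - G x) / G x := by
      rw [sub_div, div_self hG0.ne']
    rw [heqd, abs_div, abs_of_pos hG0, div_lt_iff₀ hG0]
    have h1p : (0:ℝ) ≤ 1 + ε₁ := by linarith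
    have h1m : (0:ℝ) ≤ 1 - ε₁ := by linarith
    have e1 : ε₁ * G x ≤ ε/2 * G x := mul_le_mul_of_nonneg_right hε₁a hG0.le
    have e2 : -((1+ε₁) * G δ) ≤ 2 * |G δ| := by
      calc -((1+ε₁) * G δ) = (1+ε₁) * (-(G δ)) := by ring
        _ ≤ (1+ε₁) * |G δ| := mul_le_mul_of_nonneg_left (neg_le_abs _) h1p
        _ ≤ 2 * |G δ| := mul_le_mul_of_nonneg_right (by linarith) (abs_nonneg _)
    have e3 : (1-ε₁) * G δ ≤ 2 * |G δ| := by
      calc (1-ε₁) * G δ ≤ (1-ε₁) * |G δ| := mul_le_mul_of_nonneg_left (le_abs_self _) h1m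
        _ ≤ 2 * |G δ| := mul_le_mul_of_nonneg_right (by linarith) (abs_nonneg _)
    rw [abs_lt]
    constructor
    · have := hb.1
      nlinarith [neg_abs_le C]
    · have := hb.2
      nlinarith [le_abs_self C]
  have hxt : Tendsto Finv atTop (𝓝[>] (0:ℝ)) := by
    rw [tendsto_nhdsWithin_iff]
    exact ⟨hFinv0, hFinv_pos⟩
  have hTG : Tendsto (fun t => t / G (Finv t)) atTop (𝓝 1) := by
    have h := HFG.comp hxt
    refine h.congr' ?_
    filter_upwards [hFinv] with t ht
    simp only [Function.comp]
    rw [ht]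
  have hGFpos : ∀ᶠ t in atTop, 0 < G (Finv t) := hxt.eventually hGpos
  have hSA : Tendsto (fun t => Real.log t - Real.log (G (Finv t))) atTop (𝓝 0) := by
    have := blockE hGFpos hTG
    simpa using this
  have hlam : Tendsto (fun t => Real.log (1 / Finv t)) atTop atTop := F1.comp hxt
  have hlampos : ∀ᶠ t in atTop, 0 < Real.log (1/Finv t) := hlam.eventually_gt_atTop 0
  have hlamb : Tendsto (fun t => (β-1) * Real.log (1/Finv t)) atTop atTop :=
    hlam.const_mul_atTop hβ0
  have hA : Tendsto (fun t => Real.log (G (Finv t)) / ((β-1) * Real.log (1/Finv t)))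
      atTop (𝓝 1) := by
    have h0 : Tendsto (fun t => ((β - 1) + (-Real.log K
        - β₁ * Real.log (Real.log (1/Finv t))
        - β₂ * Real.log (Real.log (Real.log (1/Finv t)))) / Real.log (1/Finv t)) / (β-1))
        atTop (𝓝 1) := by
      have := (hfac.comp hxt).div_const (β-1)
      rw [div_self hβ0.ne'] at this
      exact this
    refine h0.congr' ?_
    filter_upwards [hxt.eventually hlogG, hlampos] with t ht hp
    rw [ht, mul_comm (Real.log (1 / Finv t)) _, mul_div_mul_right _ _ hp.ne']
  have hB : Tendsto (fun t => Real.log t / ((β-1) * Real.log (1/Finv t))) atTop (𝓝 1) := by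
    refine blockD' ((hlamb.eventually_gt_atTop 0).mono fun t ht => ht.ne') ?_
    have h1 := hSA.div_atTop hlamb
    have h2 : Tendsto (fun t => Real.log (G (Finv t)) / ((β-1) * Real.log (1/Finv t)) - 1)
        atTop (𝓝 0) := by
      have := hA.sub_const 1
      simpa using this
    have hsum := h1.add h2
    rw [add_zero] at hsum
    refine hsum.congr' ?_
    filter_upwards [(hlamb.eventually_gt_atTop 0).mono fun t ht => ht.ne'] with t ht
    have hL := right_ne_zero_of_mul ht
    field_simp
    ring
  have hρ2 : Tendsto (fun t => Real.log (1/Finv t) / (c * Real.log t)) atTop (𝓝 1) := by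
    have hinv := hB.inv₀ one_ne_zero
    rw [inv_one] at hinv
    have h2 : Tendsto (fun t => ((β-1) * Real.log (1/Finv t)) / Real.log t) atTop (𝓝 1) := by
      refine hinv.congr fun t => ?_
      rw [inv_div]
    refine h2.congr fun t => ?_
    rw [hc]
    simp only [one_div, div_eq_mul_inv, mul_inv, inv_inv]
    ring
  have hlogt : Tendsto (fun t : ℝ => Real.log t) atTop atTop := Real.tendsto_log_atTop
  have hloglogt : Tendsto (fun t : ℝ => Real.log (Real.log t)) atTop atTop :=
    Real.tendsto_log_atTop.comp hlogt
  have hclogt : Tendsto (fun t : ℝ => c * Real.log t) atTop atTop :=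
    hlogt.const_mul_atTop hcpos
  have hρ3 : Tendsto (fun t => Real.log (Real.log (1/Finv t)) / Real.log (Real.log t))
      atTop (𝓝 1) := by
    have hF' := blockF hclogt hρ2
    have hD : Tendsto (fun t => Real.log (c * Real.log t) / Real.log (Real.log t))
        atTop (𝓝 1) := by
      refine blockD' ((hloglogt.eventually_gt_atTop 0).mono fun t ht => ht.ne') ?_
      have h0 : Tendsto (fun t : ℝ => Real.log c / Real.log (Real.log t)) atTop (𝓝 0) :=
        tendsto_const_nhds.div_atTop hloglogt
      refine h0.congr' ?_
      filter_upwards [hlogt.eventually_gt_atTop 0] with t ht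
      rw [Real.log_mul hcpos.ne' ht.ne']
      ring_nf
    have := hF'.mul hD
    rw [mul_one] at this
    refine this.congr' ?_
    filter_upwards [(hclogt.eventually_gt_atTop 1)] with t ht
    have hne : Real.log (c * Real.log t) ≠ 0 := (Real.log_pos ht).ne'
    rw [div_mul_div_comm, mul_comm (Real.log (Real.log (1/Finv t))) _,
      mul_div_mul_left _ _ hne]
  have hclogt_pos : ∀ᶠ t in atTop, 0 < c * Real.log t := hclogt.eventually_gt_atTop 0
  have hloglogt_pos : ∀ᶠ t in atTop, 0 < Real.log (Real.log t) :=
    hloglogt.eventually_gt_atTop 0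
  have hML : Tendsto (fun t => L0 β₁ β₂ (Finv t) /
      ((c * Real.log t) ^ β₁ * (Real.log (Real.log t)) ^ β₂)) atTop (𝓝 1) := by
    have h1 := blockH hclogt_pos hρ2 β₁
    have h2 := blockH hloglogt_pos hρ3 β₂
    have := blockMul h1 h2
    refine this.congr fun t => ?_
    rw [div_mul_div_comm]
    rfl
  have hρ : Tendsto (fun t => t * K * (Finv t) ^ (β-1) * L0 β₁ β₂ (Finv t)) atTop (𝓝 1) := by
    refine hTG.congr' ?_
    filter_upwards [hxt.eventually hx_pos, hxt.eventually (F1.eventually_gt_atTop 1),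
      hxt.eventually (F2.eventually_gt_atTop 1), hGFpos] with t h1 h2 h3 h4
    have hu0 : (0:ℝ) < Real.log (1/Finv t) := lt_trans one_pos h2
    have hv0 : (0:ℝ) < Real.log (Real.log (1/Finv t)) := lt_trans one_pos h3
    have m1 : (Finv t) ^ (β-1) * (Finv t) ^ (1-β) = 1 := by
      rw [← Real.rpow_add h1]; norm_num
    have m2 : (Real.log (1/Finv t)) ^ β₁ * (Real.log (1/Finv t)) ^ (-β₁) = 1 := by
      rw [← Real.rpow_add hu0]; norm_num
    have m3 : (Real.log (Real.log (1/Finv t))) ^ β₂ *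
        (Real.log (Real.log (1/Finv t))) ^ (-β₂) = 1 := by
      rw [← Real.rpow_add hv0]; norm_num
    have hgoal : t / G (Finv t) = t * K * (Finv t) ^ (β-1) * L0 β₁ β₂ (Finv t) := by
      rw [div_eq_iff h4.ne']
      simp only [hG, L0]
      calc t = t * (K * K⁻¹) * ((Finv t) ^ (β-1) * (Finv t) ^ (1-β)) *
            ((Real.log (1/Finv t)) ^ β₁ * (Real.log (1/Finv t)) ^ (-β₁)) *
            ((Real.log (Real.log (1/Finv t))) ^ β₂ *
              (Real.log (Real.log (1/Finv t))) ^ (-β₂)) := by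
            rw [mul_inv_cancel₀ hKpos.ne', m1, m2, m3]; ring
        _ = t * K * (Finv t) ^ (β-1) *
            ((Real.log (1/Finv t)) ^ β₁ * (Real.log (Real.log (1/Finv t))) ^ β₂) *
            (K⁻¹ * (Finv t) ^ (1-β) * (Real.log (1/Finv t)) ^ (-β₁) *
              (Real.log (Real.log (1/Finv t))) ^ (-β₂)) := by ring
    exact hgoal
  have hρpos : ∀ᶠ t in atTop, 0 < t * K * (Finv t) ^ (β-1) * L0 β₁ β₂ (Finv t) :=
    blockPos hρ
  have hρc : Tendsto (fun t => (t * K * (Finv t) ^ (β-1) * L0 β₁ β₂ (Finv t)) ^ c)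
      atTop (𝓝 1) := by
    have := (Real.continuousAt_rpow_const 1 c (Or.inl one_ne_zero)).tendsto.comp hρ
    rw [Real.one_rpow] at this; exact this
  have hKtM_pos : ∀ᶠ t in atTop, 0 < K * t *
      ((c * Real.log t) ^ β₁ * (Real.log (Real.log t)) ^ β₂) := by
    filter_upwards [eventually_gt_atTop 0, hclogt_pos, hloglogt_pos] with t h1 h2 h3
    have := Real.rpow_pos_of_pos h2 β₁
    have := Real.rpow_pos_of_pos h3 β₂
    positivity
  have hKt_rat : Tendsto (fun t => (K * t * L0 β₁ β₂ (Finv t)) /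
      (K * t * ((c * Real.log t) ^ β₁ * (Real.log (Real.log t)) ^ β₂))) atTop (𝓝 1) := by
    refine hML.congr' ?_
    filter_upwards [eventually_gt_atTop 0] with t ht
    exact (mul_div_mul_left _ _ (mul_pos hKpos ht).ne').symm
  have hrat2 := blockH hKtM_pos hKt_rat (-c)
  have hfinal := blockMul hρc hrat2
  refine hfinal.congr' ?_
  filter_upwards [eventually_gt_atTop 0, hclogt_pos, hloglogt_pos,
    hxt.eventually hx_pos, hxt.eventually (L0_pos β₁ β₂), blockPos hρ] with t ht hcl hll hx hL0 hρt
  have hXp : (0:ℝ) < (c * Real.log t) ^ β₁ := Real.rpow_pos_of_pos hcl β₁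
  have hYp : (0:ℝ) < (Real.log (Real.log t)) ^ β₂ := Real.rpow_pos_of_pos hll β₂
  have hKtL0 : (0:ℝ) < K * t * L0 β₁ β₂ (Finv t) := by positivity
  have hKtM : (0:ℝ) < K * t * ((c * Real.log t) ^ β₁ * (Real.log (Real.log t)) ^ β₂) := by
    positivity
  -- denominator identity
  have hDen : (1 / K) ^ c * t ^ (-c) * (c * Real.log t) ^ (-(β₁ / (β - 1))) *
      (Real.log (Real.log t)) ^ (-(β₂ / (β - 1))) =
      (K * t * ((c * Real.log t) ^ β₁ * (Real.log (Real.log t)) ^ β₂)) ^ (-c) := by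
    have hexp1 : -(β₁ / (β - 1)) = β₁ * (-c) := by rw [hc]; ring
    have hexp2 : -(β₂ / (β - 1)) = β₂ * (-c) := by rw [hc]; ring
    rw [Real.mul_rpow (mul_pos hKpos ht).le (by positivity :
        (0:ℝ) ≤ (c * Real.log t) ^ β₁ * (Real.log (Real.log t)) ^ β₂),
      Real.mul_rpow hKpos.le ht.le, Real.mul_rpow hXp.le hYp.le,
      ← Real.rpow_mul hcl.le, ← Real.rpow_mul hll.le, ← hexp1, ← hexp2,
      one_div, Real.inv_rpow hKpos.le, ← Real.rpow_neg hKpos.le]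
    ring
  have hxpow : ((Finv t) ^ (β-1)) ^ c = Finv t := by
    rw [← Real.rpow_mul hx.le, show (β-1) * c = 1 by rw [hc]; field_simp, Real.rpow_one]
  have hsolve : (Finv t) ^ (β-1) =
      (t * K * (Finv t) ^ (β-1) * L0 β₁ β₂ (Finv t)) / (K * t * L0 β₁ β₂ (Finv t)) := by
    rw [eq_div_iff hKtL0.ne']
    ring
  have hNum : Finv t = (t * K * (Finv t) ^ (β-1) * L0 β₁ β₂ (Finv t)) ^ c *
      (K * t * L0 β₁ β₂ (Finv t)) ^ (-c) := by
    conv_lhs => rw [← hxpow, hsolve]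
    rw [Real.div_rpow hρt.le hKtL0.le, Real.rpow_neg hKtL0.le, div_eq_mul_inv]
  rw [hDen]
  conv_rhs => rw [hNum]
  rw [mul_div_assoc]
end

section
/- Let k_s∈C¹((0,∞);(0,∞)) with ∫_t^∞ k_s(u)du→0 and k_s(t)→0 as t→∞, and let Γ∈C¹ be increasing with Γ(t)→∞. Then there exists a function k∈C¹((0,∞);(0,∞)) (constructed by adding smooth spikes of height Γ₊(t)−k_s(t) on intervals [n,n+w_n) of widths w_n = min(1/2, ∫_{n+1}^{n+2}k_s(u)du / Γ₊(n+1)), where Γ₊(t)=Γ(t)+sup k_s+1) such that lim_{t→∞} (∫_t^∞ k(u)du)/(∫_t^∞ k_s(u)du) = 1 and limsup_{t→∞} k(t)/Γ(t) = 1. -/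
open Real Filter MeasureTheory Set Topology

/-- Auxiliary: a right-open ray is the disjoint union of the unit half-open intervals. -/
lemma stmt17_Ioi_eq_iUnion (a : ℝ) : Ioi a = ⋃ j : ℕ, Ioc (a + j) (a + j + 1) := by
  ext x
  simp only [mem_Ioi, mem_iUnion, mem_Ioc]
  constructor
  · intro hx
    have hpos : 0 < x - a := by linarith
    have h1 : (1:ℕ) ≤ ⌈x - a⌉₊ := Nat.one_le_ceil_iff.mpr hpos
    refine ⟨⌈x - a⌉₊ - 1, ?_, ?_⟩
    · have h2 : (⌈x - a⌉₊ : ℝ) < (x - a) + 1 := Nat.ceil_lt_add_one hpos.le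
      have h3 : ((⌈x - a⌉₊ - 1 : ℕ) : ℝ) = (⌈x - a⌉₊ : ℝ) - 1 := by
        push_cast [Nat.cast_sub h1]; ring
      rw [h3]; linarith
    · have h2 : (x - a) ≤ (⌈x - a⌉₊ : ℝ) := Nat.le_ceil _
      have h3 : ((⌈x - a⌉₊ - 1 : ℕ) : ℝ) = (⌈x - a⌉₊ : ℝ) - 1 := by
        push_cast [Nat.cast_sub h1]; ring
      rw [h3]; linarith
  · rintro ⟨j, h1, _⟩
    have : (0:ℝ) ≤ j := j.cast_nonneg
    linarith

/-- Auxiliary: the unit half-open intervals are pairwise disjoint. -/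
lemma stmt17_pairwise_disjoint (a : ℝ) :
    Pairwise (Function.onFun Disjoint fun j : ℕ => Ioc (a + j) (a + j + 1)) := by
  intro i j hij
  refine Set.Ioc_disjoint_Ioc.mpr ?_
  rcases lt_or_gt_of_ne hij with h | h
  · have : (i:ℝ) + 1 ≤ j := by exact_mod_cast h
    calc min (a + i + 1) (a + j + 1) ≤ a + i + 1 := min_le_left _ _
      _ ≤ a + j := by linarith
      _ ≤ max (a + i) (a + j) := le_max_right _ _
  · have : (j:ℝ) + 1 ≤ i := by exact_mod_cast h
    calc min (a + i + 1) (a + j + 1) ≤ a + j + 1 := min_le_right _ _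
      _ ≤ a + i := by linarith
      _ ≤ max (a + i) (a + j) := le_max_left _ _

set_option maxHeartbeats 2000000 in
/-- Spike lemma: given positive `C¹` integrable `k_s` with vanishing
tails, `k_s(t) → 0`, and an increasing `C¹` function `Γ → ∞`, there is a positive `C¹`
function `k` whose tail integrals are asymptotic to those of `k_s`, while
`limsup k/Γ = 1`. -/
theorem stmt17 (ks Γ : ℝ → ℝ)
    (hks_pos : ∀ t > 0, 0 < ks t) (hksC1 : ContDiffOn ℝ 1 ks (Ioi 0))
    (hks_int : IntegrableOn ks (Ioi 0))
    (hks_tail : Tendsto (fun t => ∫ u in Ioi t, ks u) atTop (𝓝 0))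
    (hks_0 : Tendsto ks atTop (𝓝 0))
    (hΓC1 : ContDiff ℝ 1 Γ) (hΓmono : Monotone Γ)
    (hGamma_top : Tendsto Γ atTop atTop) :
    ∃ k : ℝ → ℝ, (∀ t > 0, 0 < k t) ∧ ContDiffOn ℝ 1 k (Ioi 0) ∧
      IntegrableOn k (Ioi 0) ∧
      Tendsto (fun t => (∫ u in Ioi t, k u) / (∫ u in Ioi t, ks u)) atTop (𝓝 1) ∧
      limsup (fun t => k t / Γ t) atTop = 1 := by
  -- tail integral of ks
  set T : ℝ → ℝ := fun t => ∫ u in Ioi t, ks u with hT_def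
  have hT_int : ∀ t : ℝ, 0 ≤ t → IntegrableOn ks (Ioi t) := fun t ht =>
    hks_int.mono_set (Ioi_subset_Ioi ht)
  have hks_nonneg_ae : ∀ t : ℝ, 0 ≤ t → (0 : ℝ → ℝ) ≤ᵐ[volume.restrict (Ioi t)] ks := by
    intro t ht
    refine (ae_restrict_iff' measurableSet_Ioi).mpr (ae_of_all _ fun x hx => ?_)
    exact (hks_pos x (lt_of_le_of_lt ht hx)).le
  have hT_pos : ∀ t : ℝ, 0 ≤ t → 0 < T t := by
    intro t ht
    rw [hT_def]
    rw [setIntegral_pos_iff_support_of_nonneg_ae (hks_nonneg_ae t ht) (hT_int t ht)]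
    have hsub : Ioi t ⊆ Function.support ks ∩ Ioi t := fun x hx =>
      ⟨(hks_pos x (lt_of_le_of_lt ht hx)).ne', hx⟩
    calc (0:ENNReal) < volume (Ioi t) := by simp [Real.volume_Ioi]
      _ ≤ volume (Function.support ks ∩ Ioi t) := measure_mono hsub
  have hT_anti : ∀ s t : ℝ, 0 ≤ s → s ≤ t → T t ≤ T s := by
    intro s t hs hst
    exact setIntegral_mono_set (hT_int s hs) (hks_nonneg_ae s hs)
      (HasSubset.Subset.eventuallyLE (Ioi_subset_Ioi hst))
  -- threshold for Γ ≥ 1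
  obtain ⟨t₀, ht₀⟩ := eventually_atTop.mp (hGamma_top.eventually_ge_atTop 1)
  set N₀ : ℕ := max 1 ⌈t₀⌉₊ with hN₀_def
  have hN₁ : 1 ≤ N₀ := le_max_left _ _
  have hΓN : ∀ t : ℝ, (N₀:ℝ) ≤ t → 1 ≤ Γ t := by
    intro t ht
    refine ht₀ t (le_trans (Nat.le_ceil t₀) (le_trans ?_ ht))
    exact_mod_cast Nat.cast_le.mpr (le_max_right 1 ⌈t₀⌉₊)
  -- the bump profile
  set ψ : ContDiffBump (0:ℝ) :=
    ⟨1/2, 1, by norm_num, by norm_num⟩ with hψ_def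
  -- spike half-widths
  set δ : ℕ → ℝ := fun n => min (1/8) ((1/2)^n * T ((n:ℝ)+1) / (4 * max 1 (Γ ((n:ℝ)+1)))) with hδ_def
  have hδ_pos : ∀ n : ℕ, 0 < δ n := by
    intro n
    refine lt_min (by norm_num) ?_
    have h1 : 0 < T ((n:ℝ)+1) := hT_pos _ (by positivity)
    have h2 : (0:ℝ) < max 1 (Γ ((n:ℝ)+1)) := lt_of_lt_of_le one_pos (le_max_left _ _)
    positivity
  have hδ_le : ∀ n : ℕ, δ n ≤ 1/8 := fun n => min_le_left _ _
  -- the spikes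
  set φ : ℕ → ℝ → ℝ := fun n =>
    if N₀ ≤ n then (fun x => ψ ((x - ((n:ℝ) + 1/2)) / δ n)) else 0 with hφ_def
  set Φ : ℝ → ℝ := fun x => φ ⌊x⌋₊ x with hΦ_def
  set k : ℝ → ℝ := fun x => ks x + Γ x * Φ x with hk_def
  -- basic spike facts
  have hφ_pos_eq : ∀ n, N₀ ≤ n → φ n = fun x => (ψ ((x - ((n:ℝ) + 1/2)) / δ n) : ℝ) := by
    intro n hn; simp only [hφ_def]; rw [if_pos hn]
  have hφ_neg_eq : ∀ n, ¬ N₀ ≤ n → φ n = 0 := by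
    intro n hn; simp only [hφ_def]; rw [if_neg hn]
  have hφ_nonneg : ∀ n x, 0 ≤ φ n x := by
    intro n x
    by_cases hn : N₀ ≤ n
    · rw [hφ_pos_eq n hn]; exact ψ.nonneg
    · rw [hφ_neg_eq n hn]; simp
  have hφ_le_one : ∀ n x, φ n x ≤ 1 := by
    intro n x
    by_cases hn : N₀ ≤ n
    · rw [hφ_pos_eq n hn]; exact ψ.le_one
    · rw [hφ_neg_eq n hn]; simp
  have hφ_zero : ∀ (n : ℕ) (x : ℝ), δ n ≤ |x - ((n:ℝ) + 1/2)| → φ n x = 0 := by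
    intro n x hx
    by_cases hn : N₀ ≤ n
    · rw [hφ_pos_eq n hn]
      refine ψ.zero_of_le_dist ?_
      have hδ := hδ_pos n
      rw [Real.dist_eq, sub_zero, abs_div, abs_of_pos hδ]
      rw [le_div_iff₀ hδ, one_mul]
      exact hx
    · rw [hφ_neg_eq n hn]; simp
  have hφ_zero' : ∀ (n : ℕ) (x : ℝ), x ≤ (n:ℝ) + 3/8 ∨ (n:ℝ) + 5/8 ≤ x → φ n x = 0 := by
    intro n x hx
    refine hφ_zero n x (le_trans (hδ_le n) ?_)
    rcases hx with h | h
    · rw [abs_sub_comm, abs_of_nonneg (by linarith)]; linarith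
    · rw [abs_of_nonneg (by linarith)]; linarith
  have hφ_smooth : ∀ n, ContDiff ℝ 1 (φ n) := by
    intro n
    by_cases hn : N₀ ≤ n
    · rw [hφ_pos_eq n hn]
      exact ψ.contDiff.comp ((contDiff_id.sub contDiff_const).div_const _)
    · rw [hφ_neg_eq n hn]; exact contDiff_const
  -- local representation of Φ
  have hL : ∀ x : ℝ, ∃ n : ℕ, Φ =ᶠ[nhds x] φ n := by
    intro x
    by_cases hx : x < 3/8
    · refine ⟨0, ?_⟩
      have hU : Iio (3/8 : ℝ) ∈ nhds x := Iio_mem_nhds hx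
      filter_upwards [hU] with y hy
      have hy' : y < (3:ℝ)/8 := hy
      have hfl : ⌊y⌋₊ = 0 := Nat.floor_eq_zero.mpr (by linarith)
      have h0 : φ 0 y = 0 := hφ_neg_eq 0 (by omega) ▸ rfl
      simp only [hΦ_def, hfl]
    · push_neg at hx
      set m : ℕ := ⌊x - 3/8⌋₊ with hm_def
      have hx0 : (0:ℝ) ≤ x - 3/8 := by linarith
      have hml : (m:ℝ) ≤ x - 3/8 := Nat.floor_le hx0
      have hmu : x - 3/8 < (m:ℝ) + 1 := Nat.lt_floor_add_one _
      refine ⟨m, ?_⟩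
      have hU : Ioo ((m:ℝ) + 1/4) ((m:ℝ) + 11/8) ∈ nhds x :=
        Ioo_mem_nhds (by linarith) (by linarith)
      filter_upwards [hU] with y hy
      obtain ⟨hy1, hy2⟩ := hy
      have hy0 : (0:ℝ) ≤ y := by
        have : (0:ℝ) ≤ (m:ℝ) := Nat.cast_nonneg m
        linarith
      by_cases hcase : y < (m:ℝ) + 1
      · have hfl : ⌊y⌋₊ = m := by
          rw [Nat.floor_eq_iff hy0]
          constructor
          · linarith
          · push_cast; linarith
        simp only [hΦ_def, hfl]
      · push_neg at hcase
        have hfl : ⌊y⌋₊ = m + 1 := by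
          rw [Nat.floor_eq_iff hy0]
          constructor
          · push_cast; linarith
          · push_cast; linarith
        have h1 : φ (m+1) y = 0 := by
          refine hφ_zero' (m+1) y (Or.inl ?_)
          push_cast; linarith
        have h2 : φ m y = 0 := by
          refine hφ_zero' m y (Or.inr ?_)
          linarith
        simp only [hΦ_def, hfl, h1, h2]
  -- Φ is C¹
  have hΦ_smooth : ContDiff ℝ 1 Φ := by
    rw [contDiff_iff_contDiffAt]
    intro x
    obtain ⟨n, hn⟩ := hL x
    exact ((hφ_smooth n).contDiffAt).congr_of_eventuallyEq hn
  have hF_cont : Continuous (fun x => Γ x * Φ x) := hΓC1.continuous.mul hΦ_smooth.continuous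
  -- nonnegativity of the spike part
  have hF_nonneg : ∀ x, 0 ≤ Γ x * Φ x := by
    intro x
    by_cases h0 : φ ⌊x⌋₊ x = 0
    · simp only [hΦ_def, h0, mul_zero, le_refl]
    · have hn : N₀ ≤ ⌊x⌋₊ := by
        by_contra hc
        exact h0 (by rw [hφ_neg_eq _ hc]; rfl)
      have hx0 : (0:ℝ) ≤ x := by
        by_contra hc
        push_neg at hc
        rw [Nat.floor_eq_zero.mpr (by linarith)] at hn
        omega
      have hxN : (N₀:ℝ) ≤ x := le_trans (by exact_mod_cast Nat.cast_le.mpr hn) (Nat.floor_le hx0)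
      exact mul_nonneg (by linarith [hΓN x hxN]) (hφ_nonneg _ _)
  -- Φ coincides with φ n on Ioc n (n+1)
  have hΦ_Ioc : ∀ n : ℕ, ∀ x ∈ Ioc (n:ℝ) ((n:ℝ)+1), Φ x = φ n x := by
    intro n x hx
    obtain ⟨hx1, hx2⟩ := hx
    rcases lt_or_eq_of_le hx2 with h | h
    · have hfl : ⌊x⌋₊ = n := by
        rw [Nat.floor_eq_iff (le_trans (Nat.cast_nonneg n) hx1.le)]
        exact ⟨hx1.le, by push_cast; linarith⟩
      simp only [hΦ_def, hfl]
    · have hfl : ⌊x⌋₊ = n + 1 := by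
        rw [h]
        rw [show ((n:ℝ)+1) = ((n+1:ℕ):ℝ) by push_cast; ring, Nat.floor_natCast]
      have h1 : φ (n+1) x = 0 := by
        refine hφ_zero' (n+1) x (Or.inl ?_)
        push_cast; linarith
      have h2 : φ n x = 0 := by
        refine hφ_zero' n x (Or.inr ?_)
        linarith
      simp only [hΦ_def, hfl, h1, h2]
  -- integrability on bounded intervals
  have hF_intIoc : ∀ a b : ℝ, IntegrableOn (fun x => Γ x * Φ x) (Ioc a b) :=
    fun a b => hF_cont.integrableOn_Ioc
  -- nonnegativity of the interval masses
  have hB0 : ∀ n : ℕ, 0 ≤ ∫ x in Ioc (n:ℝ) ((n:ℝ)+1), Γ x * Φ x := fun n =>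
    setIntegral_nonneg measurableSet_Ioc fun x _ => hF_nonneg x
  -- per-interval mass bound
  have hB : ∀ n : ℕ, (∫ x in Ioc (n:ℝ) ((n:ℝ)+1), Γ x * Φ x) ≤ (1/2)^n * T ((n:ℝ)+1) / 2 := by
    intro n
    have hTc : 0 < T ((n:ℝ)+1) := hT_pos _ (by positivity)
    have hcongr : (∫ x in Ioc (n:ℝ) ((n:ℝ)+1), Γ x * Φ x)
        = ∫ x in Ioc (n:ℝ) ((n:ℝ)+1), Γ x * φ n x := by
      refine setIntegral_congr_fun measurableSet_Ioc fun x hx => ?_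
      rw [hΦ_Ioc n x hx]
    rw [hcongr]
    by_cases hn : N₀ ≤ n
    · -- main case: mass estimate
      set c : ℝ := (n:ℝ) + 1/2 with hc_def
      have hΓc : Γ ((n:ℝ)+1) ≤ max 1 (Γ ((n:ℝ)+1)) := le_max_right _ _
      have hΓpos : (1:ℝ) ≤ Γ ((n:ℝ)+1) := hΓN _ (by
        have : (N₀:ℝ) ≤ (n:ℝ) := Nat.cast_le.mpr hn
        linarith)
      -- step 1: bound Γ by its value at the right endpoint
      have step1 : (∫ x in Ioc (n:ℝ) ((n:ℝ)+1), Γ x * φ n x)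
          ≤ ∫ x in Ioc (n:ℝ) ((n:ℝ)+1), Γ ((n:ℝ)+1) * φ n x := by
        refine setIntegral_mono_on ?_ ?_ measurableSet_Ioc fun x hx => ?_
        · exact ((hΓC1.continuous).mul (hφ_smooth n).continuous).integrableOn_Ioc
        · exact (continuous_const.mul (hφ_smooth n).continuous).integrableOn_Ioc
        · exact mul_le_mul_of_nonneg_right (hΓmono hx.2) (hφ_nonneg n x)
      -- step 2: bound the bump integral by the measure of its support interval
      have step2 : (∫ x in Ioc (n:ℝ) ((n:ℝ)+1), φ n x) ≤ 2 * δ n := by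
        have hind : ∀ x ∈ Ioc (n:ℝ) ((n:ℝ)+1),
            φ n x ≤ (Icc (c - δ n) (c + δ n)).indicator (fun _ => (1:ℝ)) x := by
          intro x _
          by_cases hxm : x ∈ Icc (c - δ n) (c + δ n)
          · rw [indicator_of_mem hxm]; exact hφ_le_one n x
          · rw [indicator_of_notMem hxm]
            refine le_of_eq (hφ_zero n x ?_)
            rw [mem_Icc] at hxm
            push_neg at hxm
            show δ n ≤ |x - c|
            rcases lt_or_ge x (c - δ n) with h | h
            · rw [abs_sub_comm, abs_of_nonneg (by linarith [hδ_pos n])]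
              linarith
            · have h2 : c + δ n < x := hxm h
              rw [abs_of_nonneg (by linarith [hδ_pos n])]
              linarith
        have hind_int : IntegrableOn ((Icc (c - δ n) (c + δ n)).indicator (fun _ => (1:ℝ)))
            (Ioc (n:ℝ) ((n:ℝ)+1)) := by
          refine (integrable_indicator_iff measurableSet_Icc).mpr ?_
          refine (integrableOn_const_iff (by simp)).mpr (Or.inr ?_)
          rw [Measure.restrict_apply measurableSet_Icc]
          exact lt_of_le_of_lt (measure_mono inter_subset_right) measure_Ioc_lt_top
        calc (∫ x in Ioc (n:ℝ) ((n:ℝ)+1), φ n x)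
            ≤ ∫ x in Ioc (n:ℝ) ((n:ℝ)+1),
                (Icc (c - δ n) (c + δ n)).indicator (fun _ => (1:ℝ)) x :=
              setIntegral_mono_on ((hφ_smooth n).continuous.integrableOn_Ioc) hind_int
                measurableSet_Ioc hind
          _ = ∫ x in Ioc (n:ℝ) ((n:ℝ)+1) ∩ Icc (c - δ n) (c + δ n), (1:ℝ) := by
              rw [setIntegral_indicator measurableSet_Icc]
          _ = (volume (Ioc (n:ℝ) ((n:ℝ)+1) ∩ Icc (c - δ n) (c + δ n))).toReal := by
              rw [setIntegral_const, smul_eq_mul, mul_one]; rfl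
          _ ≤ (volume (Icc (c - δ n) (c + δ n))).toReal := by
              refine ENNReal.toReal_mono (by simp [Real.volume_Icc]) ?_
              exact measure_mono inter_subset_right
          _ = 2 * δ n := by
              rw [Real.volume_Icc, ENNReal.toReal_ofReal (by linarith [hδ_pos n])]
              ring
      -- combine
      have hδb : δ n ≤ (1/2)^n * T ((n:ℝ)+1) / (4 * max 1 (Γ ((n:ℝ)+1))) := min_le_right _ _
      have hM : (0:ℝ) < max 1 (Γ ((n:ℝ)+1)) := lt_of_lt_of_le one_pos (le_max_left _ _)
      calc (∫ x in Ioc (n:ℝ) ((n:ℝ)+1), Γ x * φ n x)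
          ≤ ∫ x in Ioc (n:ℝ) ((n:ℝ)+1), Γ ((n:ℝ)+1) * φ n x := step1
        _ = Γ ((n:ℝ)+1) * ∫ x in Ioc (n:ℝ) ((n:ℝ)+1), φ n x := by
            rw [integral_const_mul]
        _ ≤ Γ ((n:ℝ)+1) * (2 * δ n) := by
            refine mul_le_mul_of_nonneg_left step2 (by linarith)
        _ ≤ max 1 (Γ ((n:ℝ)+1)) * (2 * ((1/2)^n * T ((n:ℝ)+1) / (4 * max 1 (Γ ((n:ℝ)+1))))) := by
            refine mul_le_mul hΓc (by linarith [hδ_pos n]) (by linarith [hδ_pos n]) hM.le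
        _ = (1/2)^n * T ((n:ℝ)+1) / 2 := by
            field_simp
            ring
    · -- trivial case: no spike
      have : ∀ x ∈ Ioc (n:ℝ) ((n:ℝ)+1), Γ x * φ n x = 0 := by
        intro x _
        rw [hφ_neg_eq n hn]
        simp
      rw [setIntegral_congr_fun measurableSet_Ioc this]
      simp only [integral_zero]
      positivity
  -- summability of the crude bound
  have hT1pos : 0 < T 1 := hT_pos 1 one_pos.le
  have hsum : Summable (fun n : ℕ => (1/2:ℝ)^n * T 1 / 2) := by
    have h := (summable_geometric_of_lt_one (by norm_num : (0:ℝ) ≤ 1/2)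
      (by norm_num : (1/2:ℝ) < 1)).mul_right (T 1 / 2)
    refine h.congr fun n => ?_
    ring
  have hbound : ∀ n : ℕ, (∫ x in Ioc (n:ℝ) ((n:ℝ)+1), Γ x * Φ x) ≤ (1/2)^n * T 1 / 2 := by
    intro n
    refine (hB n).trans ?_
    have hTle : T ((n:ℝ)+1) ≤ T 1 := hT_anti 1 ((n:ℝ)+1) one_pos.le
      (by have : (0:ℝ) ≤ (n:ℝ) := Nat.cast_nonneg n; linarith)
    gcongr
  -- integrability of the spike part on (0, ∞)
  have hF_int : IntegrableOn (fun x => Γ x * Φ x) (Ioi 0) := by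
    constructor
    · exact hF_cont.aestronglyMeasurable.restrict
    · rw [hasFiniteIntegral_iff_ofReal (ae_of_all _ hF_nonneg)]
      have hset : ∀ j : ℕ, Ioc ((0:ℝ)+j) ((0:ℝ)+j+1) = Ioc (j:ℝ) ((j:ℝ)+1) := by
        intro j; norm_num
      calc ∫⁻ x in Ioi (0:ℝ), ENNReal.ofReal (Γ x * Φ x)
          = ∫⁻ x in ⋃ j : ℕ, Ioc ((0:ℝ)+j) ((0:ℝ)+j+1), ENNReal.ofReal (Γ x * Φ x) := by
            rw [← stmt17_Ioi_eq_iUnion 0]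
        _ ≤ ∑' j : ℕ, ∫⁻ x in Ioc ((0:ℝ)+j) ((0:ℝ)+j+1), ENNReal.ofReal (Γ x * Φ x) :=
            lintegral_iUnion_le _ _
        _ = ∑' j : ℕ, ENNReal.ofReal (∫ x in Ioc (j:ℝ) ((j:ℝ)+1), Γ x * Φ x) := by
            refine tsum_congr fun j => ?_
            rw [hset j]
            exact (ofReal_integral_eq_lintegral_ofReal (hF_intIoc _ _)
              (ae_of_all _ hF_nonneg)).symm
        _ ≤ ∑' j : ℕ, ENNReal.ofReal ((1/2)^j * T 1 / 2) :=
            ENNReal.tsum_le_tsum fun j => ENNReal.ofReal_le_ofReal (hbound j)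
        _ = ENNReal.ofReal (∑' j : ℕ, (1/2:ℝ)^j * T 1 / 2) :=
            (ENNReal.ofReal_tsum_of_nonneg (fun j => by positivity) hsum).symm
        _ < ⊤ := ENNReal.ofReal_lt_top
  have hk_int : IntegrableOn k (Ioi 0) := by
    rw [hk_def]
    exact hks_int.add hF_int
  -- tail estimate for the spike part
  have hnum_nonneg : ∀ t : ℝ, 0 ≤ ∫ x in Ioi t, Γ x * Φ x := fun t =>
    setIntegral_nonneg measurableSet_Ioi fun x _ => hF_nonneg x
  have htail : ∀ t : ℝ, 1 ≤ t → (∫ x in Ioi t, Γ x * Φ x) ≤ T t * (1/2)^⌊t⌋₊ := by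
    intro t ht
    set m : ℕ := ⌊t⌋₊ with hm_def
    have hmt : (m:ℝ) ≤ t := Nat.floor_le (by linarith)
    have htm : t ≤ (m:ℝ) + 1 := (Nat.lt_floor_add_one t).le
    have hm0 : (0:ℝ) ≤ (m:ℝ) := Nat.cast_nonneg m
    have hInt_m : IntegrableOn (fun x => Γ x * Φ x) (Ioi (m:ℝ)) := by
      refine hF_int.mono_set (Ioi_subset_Ioi ?_)
      have h1 : (1:ℕ) ≤ m := Nat.le_floor (by exact_mod_cast ht)
      exact_mod_cast Nat.cast_nonneg m
    have step1 : (∫ x in Ioi t, Γ x * Φ x) ≤ ∫ x in Ioi (m:ℝ), Γ x * Φ x := by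
      refine setIntegral_mono_set hInt_m ?_ (HasSubset.Subset.eventuallyLE (Ioi_subset_Ioi hmt))
      exact (ae_restrict_iff' measurableSet_Ioi).mpr (ae_of_all _ fun x _ => hF_nonneg x)
    have hUnion : Ioi (m:ℝ) = ⋃ j : ℕ, Ioc ((m:ℝ)+j) ((m:ℝ)+j+1) := stmt17_Ioi_eq_iUnion _
    have hHasSum : HasSum (fun j : ℕ => ∫ x in Ioc ((m:ℝ)+j) ((m:ℝ)+j+1), Γ x * Φ x)
        (∫ x in Ioi (m:ℝ), Γ x * Φ x) := by
      have h := hasSum_integral_iUnion (f := fun x => Γ x * Φ x)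
        (fun j : ℕ => measurableSet_Ioc) (stmt17_pairwise_disjoint (m:ℝ))
        (by rw [← hUnion]; exact hInt_m)
      rwa [← hUnion] at h
    have hterm : ∀ j : ℕ, (∫ x in Ioc ((m:ℝ)+j) ((m:ℝ)+j+1), Γ x * Φ x)
        ≤ (1/2)^(m+j) * T t / 2 := by
      intro j
      have hcast : ((m+j:ℕ):ℝ) = (m:ℝ) + j := by push_cast; ring
      have hb := hB (m+j)
      rw [hcast] at hb
      refine hb.trans ?_
      have hTle : T ((m:ℝ)+j+1) ≤ T t := by
        refine hT_anti t ((m:ℝ)+j+1) (by linarith) ?_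
        have : (0:ℝ) ≤ (j:ℝ) := Nat.cast_nonneg j
        linarith
      gcongr
    have hsum2 : Summable (fun j : ℕ => (1/2:ℝ)^(m+j) * T t / 2) := by
      have h := (summable_geometric_of_lt_one (by norm_num : (0:ℝ) ≤ 1/2)
        (by norm_num : (1/2:ℝ) < 1)).mul_left ((1/2:ℝ)^m * T t / 2)
      refine h.congr fun j => ?_
      rw [pow_add]; ring
    have htsum : (∑' j : ℕ, (1/2:ℝ)^(m+j) * T t / 2) = T t * (1/2)^m := by
      have heq : (fun j : ℕ => (1/2:ℝ)^(m+j) * T t / 2)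
          = fun j : ℕ => ((1/2:ℝ)^m * T t / 2) * (1/2)^j := by
        funext j; rw [pow_add]; ring
      rw [heq, tsum_mul_left, tsum_geometric_two]
      ring
    calc (∫ x in Ioi t, Γ x * Φ x)
        ≤ ∫ x in Ioi (m:ℝ), Γ x * Φ x := step1
      _ = ∑' j : ℕ, ∫ x in Ioc ((m:ℝ)+j) ((m:ℝ)+j+1), Γ x * Φ x := hHasSum.tsum_eq.symm
      _ ≤ ∑' j : ℕ, (1/2:ℝ)^(m+j) * T t / 2 := Summable.tsum_le_tsum hterm hHasSum.summable hsum2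
      _ = T t * (1/2)^m := htsum
  -- the ratio of tails tends to 1
  have hratio0 : Tendsto (fun t => (∫ x in Ioi t, Γ x * Φ x) / T t) atTop (𝓝 0) := by
    have hupper : Tendsto (fun t : ℝ => ((1/2:ℝ))^⌊t⌋₊) atTop (𝓝 0) :=
      (tendsto_pow_atTop_nhds_zero_of_lt_one (by norm_num) (by norm_num)).comp
        tendsto_nat_floor_atTop
    refine tendsto_of_tendsto_of_tendsto_of_le_of_le' tendsto_const_nhds hupper ?_ ?_
    · filter_upwards [eventually_ge_atTop (1:ℝ)] with t ht
      exact div_nonneg (hnum_nonneg t) (hT_pos t (by linarith)).le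
    · filter_upwards [eventually_ge_atTop (1:ℝ)] with t ht
      rw [div_le_iff₀ (hT_pos t (by linarith))]
      calc (∫ x in Ioi t, Γ x * Φ x) ≤ T t * (1/2)^⌊t⌋₊ := htail t ht
        _ = (1/2)^⌊t⌋₊ * T t := by ring
  have hmain : Tendsto (fun t => (∫ u in Ioi t, k u) / (∫ u in Ioi t, ks u)) atTop (𝓝 1) := by
    have heq : ∀ᶠ t in atTop, 1 + (∫ x in Ioi t, Γ x * Φ x) / T t
        = (∫ u in Ioi t, k u) / (∫ u in Ioi t, ks u) := by
      filter_upwards [eventually_ge_atTop (1:ℝ)] with t ht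
      have h1 : IntegrableOn ks (Ioi t) := hT_int t (by linarith)
      have h2 : IntegrableOn (fun x => Γ x * Φ x) (Ioi t) :=
        hF_int.mono_set (Ioi_subset_Ioi (by linarith))
      have h3 : (∫ u in Ioi t, k u) = (∫ u in Ioi t, ks u) + ∫ x in Ioi t, Γ x * Φ x := by
        rw [hk_def]
        exact integral_add h1 h2
      rw [h3, add_div, div_self (hT_pos t (by linarith)).ne']
    have h := tendsto_const_nhds.add hratio0 (f := fun _ : ℝ => (1:ℝ))
    rw [add_zero] at h
    exact Tendsto.congr' heq h
  -- the limsup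
  have hΦ_eval : ∀ t : ℝ, (N₀:ℝ) ≤ t → k t / Γ t = ks t / Γ t + Φ t := by
    intro t ht
    have h1 : Γ t ≠ 0 := by linarith [hΓN t ht]
    rw [hk_def]
    show (ks t + Γ t * Φ t) / Γ t = ks t / Γ t + Φ t
    field_simp
  have hfr : ∃ᶠ t in atTop, (1:ℝ) ≤ k t / Γ t := by
    rw [frequently_atTop]
    intro a
    set n : ℕ := max N₀ ⌈a⌉₊ with hn_def
    have hnN : N₀ ≤ n := le_max_left _ _
    refine ⟨(n:ℝ) + 1/2, ?_, ?_⟩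
    · have h1 : a ≤ (⌈a⌉₊:ℝ) := Nat.le_ceil a
      have h2 : (⌈a⌉₊:ℝ) ≤ (n:ℝ) := Nat.cast_le.mpr (le_max_right _ _)
      linarith
    · set t : ℝ := (n:ℝ) + 1/2 with ht_def
      have htN : (N₀:ℝ) ≤ t := by
        have : (N₀:ℝ) ≤ (n:ℝ) := Nat.cast_le.mpr hnN
        rw [ht_def]; linarith
      have hfl : ⌊t⌋₊ = n := by
        rw [Nat.floor_eq_iff (by rw [ht_def]; positivity)]
        constructor
        · rw [ht_def]; linarith
        · rw [ht_def]; push_cast; linarith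
      have hΦt : Φ t = 1 := by
        have harg : (t - ((n:ℝ) + 1/2)) / δ n = 0 := by
          rw [ht_def, sub_self, zero_div]
        have hmem : (0:ℝ) ∈ Metric.closedBall (0:ℝ) ψ.rIn := by
          rw [hψ_def]
          exact Metric.mem_closedBall_self (by norm_num)
        simp only [hΦ_def, hfl]
        rw [hφ_pos_eq n hnN]
        show (ψ ((t - ((n:ℝ) + 1/2)) / δ n) : ℝ) = 1
        rw [harg]
        exact ψ.one_of_mem_closedBall hmem
      have hks_t : 0 < ks t := hks_pos t (by rw [ht_def]; positivity)
      have hΓt : 1 ≤ Γ t := hΓN t htN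
      rw [hΦ_eval t htN, hΦt]
      have : 0 ≤ ks t / Γ t := div_nonneg hks_t.le (by linarith)
      linarith
  have hub : ∀ ε : ℝ, 0 < ε → ∀ᶠ t in atTop, k t / Γ t ≤ 1 + ε := by
    intro ε hε
    have hks_ev : ∀ᶠ t in atTop, ks t < ε := hks_0.eventually (gt_mem_nhds hε)
    filter_upwards [hks_ev, eventually_ge_atTop ((N₀:ℝ))] with t h1 h2
    rw [hΦ_eval t h2]
    have hΓt := hΓN t h2
    have hN1R : (1:ℝ) ≤ (N₀:ℝ) := by exact_mod_cast hN₁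
    have hkst : 0 < ks t := hks_pos t (by linarith)
    have hdiv : ks t / Γ t ≤ ks t := div_le_self hkst.le hΓt
    have hΦle : Φ t ≤ 1 := hφ_le_one _ _
    linarith
  have hbdd : IsBoundedUnder (· ≤ ·) atTop (fun t => k t / Γ t) :=
    isBoundedUnder_of_eventually_le (hub 1 one_pos)
  have hls_ge : 1 ≤ limsup (fun t => k t / Γ t) atTop := le_limsup_of_frequently_le hfr hbdd
  have hls_le : limsup (fun t => k t / Γ t) atTop ≤ 1 := by
    refine le_of_forall_pos_le_add fun ε hε => ?_
    exact limsup_le_of_le (IsCoboundedUnder.of_frequently_ge hfr) (hub ε hε)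
  refine ⟨k, ?_, ?_, hk_int, hmain, le_antisymm hls_le hls_ge⟩
  · intro t ht
    rw [hk_def]
    exact add_pos_of_pos_of_nonneg (hks_pos t ht) (hF_nonneg t)
  · rw [hk_def]
    exact hksC1.add ((hΓC1.mul hΦ_smooth).contDiffOn)
end

section
/- Let z be a C¹ function on [T,∞) with z(t)→0 as t→∞, satisfying z'(t)=-f(z(t)+γ(t)) where f is continuous and asymptotic at 0 to an increasing odd C¹ function φ∈RV₀(β) (β>1), γ is continuous, and suppose there exist M∈(0,∞) and T₀ such that |z(t)|>(M/2)F⁻¹(t) for all t≥T₀ and γ(t)/F⁻¹(t)→0 as t→∞. Then lim_{t→∞}|z(t)|/F⁻¹(t)=1; in particular, liminf_{t→∞}|z(t)|/F⁻¹(t) can only equal 0 or 1. -/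
open Real Filter MeasureTheory Set Topology



lemma my_geom_le {r : ℝ} (hr0 : 0 ≤ r) (hr1 : r < 1) (n : ℕ) :
    (∑ k ∈ Finset.range n, r ^ k) ≤ 1 / (1 - r) := by
  rw [le_div_iff₀ (by linarith)]
  have h := geom_sum_mul r n
  have hrn : 0 ≤ r ^ n := pow_nonneg hr0 n
  nlinarith [h]

lemma my_sign_const (z : ℝ → ℝ) (T₁ : ℝ) (hcont : ∀ t ≥ T₁, ContinuousAt z t)
    (hne : ∀ t ≥ T₁, z t ≠ 0) : (∀ t ≥ T₁, 0 < z t) ∨ (∀ t ≥ T₁, z t < 0) := by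
  rcases (hne T₁ le_rfl).lt_or_gt with h0 | h0
  · right
    intro t ht
    by_contra hpos
    push_neg at hpos
    have hpos' : 0 < z t := lt_of_le_of_ne hpos (Ne.symm (hne t ht))
    have hcs : ContinuousOn z (Icc T₁ t) := fun x hx =>
      (hcont x hx.1).continuousWithinAt
    have : (0:ℝ) ∈ Icc (z T₁) (z t) := ⟨h0.le, hpos'.le⟩
    obtain ⟨x, hx, hx0⟩ := intermediate_value_Icc (le_trans le_rfl ht) hcs this
    exact hne x hx.1 hx0
  · left
    intro t ht
    by_contra hpos
    push_neg at hpos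
    have hpos' : z t < 0 := lt_of_le_of_ne hpos (hne t ht)
    have hcs : ContinuousOn z (Icc T₁ t) := fun x hx =>
      (hcont x hx.1).continuousWithinAt
    have : (0:ℝ) ∈ Icc (z t) (z T₁) := ⟨hpos'.le, h0.le⟩
    obtain ⟨x, hx, hx0⟩ := intermediate_value_Icc' ht hcs this
    exact hne x hx.1 hx0

lemma my_growth (Ψ q : ℝ → ℝ) (T₂ ε : ℝ)
    (hderiv : ∀ t ≥ T₂, HasDerivAt Ψ (q t) t) (hq : ∀ t ≥ T₂, |q t - 1| ≤ ε) :
    ∀ t ≥ T₂, (1 - ε) * (t - T₂) + Ψ T₂ ≤ Ψ t ∧ Ψ t ≤ (1 + ε) * (t - T₂) + Ψ T₂ := by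
  have key : ∀ (c : ℝ), (∀ t ≥ T₂, c ≤ q t) →
      ∀ t ≥ T₂, c * (t - T₂) + Ψ T₂ ≤ Ψ t := by
    intro c hc t ht
    have hmono : MonotoneOn (fun t => Ψ t - c * t) (Ici T₂) := by
      apply monotoneOn_of_deriv_nonneg (convex_Ici T₂)
      · intro x hx
        exact ((hderiv x hx).continuousAt.sub (continuousAt_const.mul continuousAt_id)).continuousWithinAt
      · intro x hx
        rw [interior_Ici] at hx
        exact ((hderiv x hx.le).sub ((hasDerivAt_id x).const_mul c)).differentiableAt.differentiableWithinAt
      · intro x hx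
        rw [interior_Ici] at hx
        have hd : HasDerivAt (fun t => Ψ t - c * t) (q x - c * 1) x :=
          (hderiv x hx.le).sub ((hasDerivAt_id x).const_mul c)
        rw [hd.deriv]
        have := hc x hx.le
        simp only [mul_one]
        linarith
    have := hmono (mem_Ici.2 le_rfl) (mem_Ici.2 ht) ht
    simp only at this
    linarith
  intro t ht
  constructor
  · have := key (1 - ε) (fun u hu => by have := abs_le.1 (hq u hu); linarith) t ht
    linarith
  · have key2 : ∀ t ≥ T₂, Ψ t ≤ (1 + ε) * (t - T₂) + Ψ T₂ := by
      intro u hu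
      have hmono : MonotoneOn (fun t => (1 + ε) * t - Ψ t) (Ici T₂) := by
        apply monotoneOn_of_deriv_nonneg (convex_Ici T₂)
        · intro x hx
          exact ((continuousAt_const.mul continuousAt_id).sub (hderiv x hx).continuousAt).continuousWithinAt
        · intro x hx
          rw [interior_Ici] at hx
          exact (((hasDerivAt_id x).const_mul (1+ε)).sub (hderiv x hx.le)).differentiableAt.differentiableWithinAt
        · intro x hx
          rw [interior_Ici] at hx
          have hd : HasDerivAt (fun t => (1 + ε) * t - Ψ t) ((1 + ε) * 1 - q x) x :=
            ((hasDerivAt_id x).const_mul (1+ε)).sub (hderiv x hx.le)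
          rw [hd.deriv]
          have := abs_le.1 (hq x hx.le)
          simp only [mul_one]
          linarith
      have := hmono (mem_Ici.2 le_rfl) (mem_Ici.2 hu) hu
      simp only at this
      linarith
    exact key2 t ht

lemma my_dyadic (f φ : ℝ → ℝ) (hfc : Continuous f) (c ρ : ℝ) (hc : 0 < c) (hρ : 2 < ρ)
    (hφmono : StrictMono φ) (hφ0 : φ 0 = 0)
    (hdouble : ∀ y, 0 < y → y ≤ c → ρ * φ y ≤ φ (2 * y))
    (hf1 : ∀ u, 0 < u → u ≤ 2 * c → φ u / 2 ≤ f u) :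
    ∀ n : ℕ, ∀ x, 0 < x → x ≤ c → c ≤ 2 ^ (n + 1) * x →
      (∫ u in x..c, 1 / f u) ≤ (2 * x / φ x) * ∑ k ∈ Finset.range (n + 1), (2 / ρ) ^ k := by
  have φpos : ∀ y : ℝ, 0 < y → 0 < φ y := fun y hy => hφ0 ▸ hφmono hy
  have fpos : ∀ u, 0 < u → u ≤ 2 * c → 0 < f u := fun u hu hu2 =>
    lt_of_lt_of_le (by linarith [φpos u hu]) (hf1 u hu hu2)
  have hint : ∀ x b : ℝ, 0 < x → x ≤ b → b ≤ 2 * c →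
      IntervalIntegrable (fun u => 1 / f u) volume x b := by
    intro x b hx hxb hb2
    apply ContinuousOn.intervalIntegrable
    rw [uIcc_of_le hxb]
    intro u hu
    exact (continuousAt_const.div hfc.continuousAt
      (ne_of_gt (fpos u (lt_of_lt_of_le hx hu.1) (le_trans hu.2 hb2)))).continuousWithinAt
  have piece : ∀ x b : ℝ, 0 < x → x ≤ b → b ≤ 2 * c →
      (∫ u in x..b, 1 / f u) ≤ (b - x) * (2 / φ x) := by
    intro x b hx hxb hb2
    have hmono := intervalIntegral.integral_mono_on (μ := volume) hxb (hint x b hx hxb hb2)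
      (intervalIntegrable_const (c := 2 / φ x)) (fun u hu => by
        have hu0 : 0 < u := lt_of_lt_of_le hx hu.1
        have hfu : φ x / 2 ≤ f u := le_trans (by
          have := hφmono.monotone hu.1
          linarith) (hf1 u hu0 (le_trans hu.2 hb2))
        have hφx : 0 < φ x := φpos x hx
        rw [div_le_div_iff₀ (fpos u hu0 (le_trans hu.2 hb2)) hφx]
        linarith)
    calc (∫ u in x..b, 1 / f u) ≤ ∫ _ in x..b, (2 / φ x) := hmono
      _ = (b - x) * (2 / φ x) := by rw [intervalIntegral.integral_const, smul_eq_mul]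
  intro n
  induction n with
  | zero =>
    intro x hx hxc h2
    have hφx : 0 < φ x := φpos x hx
    have : (∫ u in x..c, 1 / f u) ≤ (c - x) * (2 / φ x) :=
      piece x c hx hxc (by linarith)
    have hsum : (∑ k ∈ Finset.range 1, (2 / ρ : ℝ) ^ k) = 1 := by simp
    rw [hsum, mul_one]
    have hcx : c - x ≤ x := by
      have : (2:ℝ) ^ (0 + 1) * x = 2 * x := by ring
      rw [this] at h2; linarith
    calc (∫ u in x..c, 1 / f u) ≤ (c - x) * (2 / φ x) := this
      _ ≤ x * (2 / φ x) := by
          apply mul_le_mul_of_nonneg_right hcx (by positivity)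
      _ = 2 * x / φ x := by ring
  | succ n ih =>
    intro x hx hxc h2
    have hφx : 0 < φ x := φpos x hx
    have hρ0 : (0:ℝ) < ρ := by linarith
    have hr0 : (0:ℝ) ≤ 2 / ρ := by positivity
    have hsum_ge : (1:ℝ) ≤ ∑ k ∈ Finset.range (n + 2), (2 / ρ : ℝ) ^ k := by
      have := Finset.single_le_sum (f := fun k => (2 / ρ : ℝ) ^ k)
        (fun k _ => pow_nonneg hr0 k) (Finset.mem_range.2 (Nat.succ_pos (n+1)))
      simpa using this
    by_cases hcase : c ≤ 2 * x
    · have hb := piece x c hx hxc (by linarith)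
      have hcx : c - x ≤ x := by linarith
      calc (∫ u in x..c, 1 / f u) ≤ (c - x) * (2 / φ x) := hb
        _ ≤ x * (2 / φ x) := mul_le_mul_of_nonneg_right hcx (by positivity)
        _ = (2 * x / φ x) * 1 := by ring
        _ ≤ (2 * x / φ x) * ∑ k ∈ Finset.range (n + 2), (2 / ρ : ℝ) ^ k := by
            apply mul_le_mul_of_nonneg_left hsum_ge (by positivity)
    · push_neg at hcase
      have h2x : 0 < 2 * x := by linarith
      have h2xc : 2 * x ≤ c := hcase.le
      have hsplit : (∫ u in x..(2*x), 1 / f u) + (∫ u in (2*x)..c, 1 / f u)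
          = ∫ u in x..c, 1 / f u :=
        intervalIntegral.integral_add_adjacent_intervals
          (hint x (2*x) hx (by linarith) (by linarith))
          (hint (2*x) c h2x h2xc (by linarith))
      have hI1 : (∫ u in x..(2*x), 1 / f u) ≤ 2 * x / φ x := by
        have := piece x (2*x) hx (by linarith) (by linarith)
        calc (∫ u in x..(2*x), 1 / f u) ≤ (2*x - x) * (2 / φ x) := this
          _ = 2 * x / φ x := by ring
      have hIH : (∫ u in (2*x)..c, 1 / f u)
          ≤ (2 * (2*x) / φ (2*x)) * ∑ k ∈ Finset.range (n + 1), (2 / ρ : ℝ) ^ k := by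
        apply ih (2*x) h2x h2xc
        calc c ≤ 2 ^ (n + 1 + 1) * x := h2
          _ = 2 ^ (n + 1) * (2 * x) := by ring
      have hφ2x : ρ * φ x ≤ φ (2*x) := hdouble x hx hxc
      have hφ2xpos : 0 < φ (2*x) := φpos _ h2x
      have hstep : (2 * (2*x) / φ (2*x)) ≤ (2 * x / φ x) * (2 / ρ) := by
        rw [div_le_iff₀ hφ2xpos]
        have key : (2 * x / φ x) * (2 / ρ) * (ρ * φ x) = 4 * x := by
          field_simp
          ring
        calc (2 * (2*x) : ℝ) = 4 * x := by ring
          _ = (2 * x / φ x) * (2 / ρ) * (ρ * φ x) := key.symm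
          _ ≤ (2 * x / φ x) * (2 / ρ) * φ (2*x) := by
              apply mul_le_mul_of_nonneg_left hφ2x (by positivity)
      have hsum_nonneg : (0:ℝ) ≤ ∑ k ∈ Finset.range (n + 1), (2 / ρ : ℝ) ^ k :=
        Finset.sum_nonneg fun k _ => pow_nonneg hr0 k
      have hgeom : (∑ k ∈ Finset.range (n + 2), (2 / ρ : ℝ) ^ k)
          = (2/ρ) * (∑ k ∈ Finset.range (n + 1), (2 / ρ : ℝ) ^ k) + 1 :=
        geom_sum_succ
      rw [← hsplit, hgeom]
      have : (∫ u in (2*x)..c, 1 / f u) ≤ (2 * x / φ x) * ((2/ρ) *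
          ∑ k ∈ Finset.range (n + 1), (2 / ρ : ℝ) ^ k) := by
        calc (∫ u in (2*x)..c, 1 / f u)
            ≤ (2 * (2*x) / φ (2*x)) * ∑ k ∈ Finset.range (n + 1), (2 / ρ : ℝ) ^ k := hIH
          _ ≤ ((2 * x / φ x) * (2 / ρ)) * ∑ k ∈ Finset.range (n + 1), (2 / ρ : ℝ) ^ k :=
              mul_le_mul_of_nonneg_right hstep hsum_nonneg
          _ = (2 * x / φ x) * ((2/ρ) * ∑ k ∈ Finset.range (n + 1), (2 / ρ : ℝ) ^ k) := by ring
      have hx2 : 0 < 2 * x / φ x := by positivity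
      nlinarith [hI1, this]

set_option maxHeartbeats 1600000 in
/-- If `z' = -f(z + γ)` on `[T,∞)`, `z(t) → 0`, `f` is asymptotic at 0 to
an increasing odd `C¹` function `φ ∈ RV₀(β)` with `β > 1`, `γ(t)/F⁻¹(t) → 0`, and
`|z(t)| > (M/2) F⁻¹(t)` eventually for some `M > 0`, then `|z(t)|/F⁻¹(t) → 1`; in
particular the liminf of `|z(t)|/F⁻¹(t)` can only be `0` or `1`. -/
theorem stmt19 (f φ γ z Finv : ℝ → ℝ) (β T M T₀ : ℝ) (hβ : 1 < β)
    (hfc : Continuous f)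
    (hφodd : ∀ y, φ (-y) = -φ y) (hφmono : StrictMono φ) (hφC1 : ContDiff ℝ 1 φ)
    (hφrv : ∀ l : ℝ, 0 < l →
      Tendsto (fun y => φ (l * y) / φ y) (𝓝[>] 0) (𝓝 (l ^ β)))
    (hasym : Tendsto (fun y => f y / φ y) (𝓝[≠] 0) (𝓝 1))
    (hγ : Continuous γ)
    (hFinv_pos : ∀ᶠ t in atTop, 0 < Finv t)
    (hFinv : ∀ᶠ t in atTop, (∫ u in Finv t..1, 1 / f u) = t)
    (hFinv0 : Tendsto Finv atTop (𝓝 0))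
    (hz : ∀ t ≥ T, HasDerivAt z (-f (z t + γ t)) t)
    (hz0 : Tendsto z atTop (𝓝 0))
    (hM : 0 < M) (hlow : ∀ t ≥ T₀, (M / 2) * Finv t < |z t|)
    (hγF : Tendsto (fun t => γ t / Finv t) atTop (𝓝 0)) :
    Tendsto (fun t => |z t| / Finv t) atTop (𝓝 1) ∧
    (liminf (fun t => |z t| / Finv t) atTop = 0 ∨
     liminf (fun t => |z t| / Finv t) atTop = 1) := by
  -- Part 0 : basic facts about φ
  have hφ0 : φ 0 = 0 := by have := hφodd 0; simp at this; linarith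
  have φpos : ∀ y : ℝ, 0 < y → 0 < φ y := fun y hy => hφ0 ▸ hφmono hy
  have φne : ∀ y : ℝ, y ≠ 0 → φ y ≠ 0 := by
    intro y hy
    rcases hy.lt_or_gt with h | h
    · have : φ y < 0 := hφ0 ▸ hφmono h
      exact this.ne
    · exact (φpos y h).ne'
  have h2β : (2:ℝ) < 2 ^ β := by
    calc (2:ℝ) = 2 ^ (1:ℝ) := (Real.rpow_one 2).symm
      _ < 2 ^ β := by rw [Real.rpow_lt_rpow_left_iff one_lt_two]; exact hβ
  -- Part 1 : δ₀ from hasym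
  have hev : ∀ᶠ x in 𝓝[≠] (0:ℝ), |f x / φ x - 1| < 1/2 := by
    have := Metric.tendsto_nhds.1 hasym (1/2) (by norm_num)
    simpa [Real.dist_eq] using this
  rw [eventually_nhdsWithin_iff, Metric.eventually_nhds_iff] at hev
  obtain ⟨δ₀, hδ₀pos, hδ₀⟩ := hev
  have hδ₀' : ∀ x : ℝ, x ≠ 0 → |x| < δ₀ → |f x / φ x - 1| < 1/2 := by
    intro x hx h
    exact hδ₀ (by simpa [Real.dist_eq] using h) (by simpa using hx)
  have hflb : ∀ x : ℝ, 0 < x → x < δ₀ → φ x / 2 ≤ f x := by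
    intro x hx hlt
    have hφx := φpos x hx
    have h := abs_lt.1 (hδ₀' x hx.ne' (by rwa [abs_of_pos hx]))
    have hfx : f x = (f x / φ x) * φ x := by field_simp
    nlinarith [h.1, h.2]
  have hfub : ∀ x : ℝ, 0 < x → x < δ₀ → f x ≤ 2 * φ x := by
    intro x hx hlt
    have hφx := φpos x hx
    have h := abs_lt.1 (hδ₀' x hx.ne' (by rwa [abs_of_pos hx]))
    have hfx : f x = (f x / φ x) * φ x := by field_simp
    nlinarith [h.1, h.2]
  have fposd : ∀ x : ℝ, 0 < x → x < δ₀ → 0 < f x := fun x hx hlt =>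
    lt_of_lt_of_le (by have := φpos x hx; linarith) (hflb x hx hlt)
  -- Part 2 : ρ and δ₁
  set ρ : ℝ := (2 + 2 ^ β) / 2 with hρ_def
  have hρ2 : 2 < ρ := by rw [hρ_def]; linarith
  have hρβ : ρ < 2 ^ β := by rw [hρ_def]; linarith
  have hev2 : ∀ᶠ y in 𝓝[>] (0:ℝ), ρ < φ (2 * y) / φ y :=
    (hφrv 2 two_pos).eventually (eventually_gt_nhds hρβ)
  rw [eventually_nhdsWithin_iff, Metric.eventually_nhds_iff] at hev2
  obtain ⟨δ₁, hδ₁pos, hδ₁⟩ := hev2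
  have hδ₁' : ∀ y : ℝ, 0 < y → y < δ₁ → ρ * φ y ≤ φ (2 * y) := by
    intro y hy hlt
    have h := hδ₁ (by rw [Real.dist_eq, sub_zero, abs_of_pos hy]; exact hlt)
      (by simpa using hy)
    have hφy := φpos y hy
    rw [lt_div_iff₀ hφy] at h
    linarith
  -- Part 3 : choose c = Finv t₁
  have hgs : Tendsto Finv atTop (𝓝[>] 0) := tendsto_nhdsWithin_iff.2 ⟨hFinv0, hFinv_pos⟩
  have hcs : ∀ᶠ t in atTop, Finv t < min δ₀ δ₁ / 2 :=
    hFinv0.eventually_lt_const (by positivity)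
  obtain ⟨t₁, ht₁⟩ := ((hFinv_pos.and (hcs.and (hFinv.and (eventually_ge_atTop 1)))).exists)
  obtain ⟨ht₁pos, ht₁c, hFc, ht₁1⟩ := ht₁
  set c : ℝ := Finv t₁ with hc_def
  have hcpos : 0 < c := ht₁pos
  have hcδ₀ : 2 * c < δ₀ := by
    have : c < min δ₀ δ₁ / 2 := ht₁c
    have h1 : min δ₀ δ₁ ≤ δ₀ := min_le_left _ _
    linarith
  have hcδ₁ : c < δ₁ := by
    have : c < min δ₀ δ₁ / 2 := ht₁c
    have h1 : min δ₀ δ₁ ≤ δ₁ := min_le_right _ _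
    linarith
  -- Part 4 : G and its properties
  have fpos2c : ∀ u : ℝ, 0 < u → u ≤ 2 * c → 0 < f u := fun u hu h2 =>
    fposd u hu (lt_of_le_of_lt h2 hcδ₀)
  have hint : ∀ x b : ℝ, 0 < x → x ≤ b → b ≤ 2 * c →
      IntervalIntegrable (fun u => 1 / f u) volume x b := by
    intro x b hx hxb hb2
    apply ContinuousOn.intervalIntegrable
    rw [uIcc_of_le hxb]
    intro u hu
    exact (continuousAt_const.div hfc.continuousAt
      (ne_of_gt (fpos2c u (lt_of_lt_of_le hx hu.1) (le_trans hu.2 hb2)))).continuousWithinAt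
  have hintc1 : IntervalIntegrable (fun u => 1 / f u) volume c 1 := by
    by_contra hcon
    have h0 := intervalIntegral.integral_undef hcon
    rw [hFc] at h0
    linarith
  set G : ℝ → ℝ := fun x => ∫ u in x..c, 1 / f u with hG_def
  have hGF : ∀ x : ℝ, 0 < x → x ≤ c → (∫ u in x..1, 1 / f u) = G x + t₁ := by
    intro x hx hxc
    have hadj := intervalIntegral.integral_add_adjacent_intervals
      (hint x c hx hxc (by linarith)) hintc1
    rw [← hadj, hFc]
  have hGsub : ∀ x b : ℝ, 0 < x → x ≤ b → b ≤ c →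
      G x = (∫ u in x..b, 1 / f u) + G b := by
    intro x b hx hxb hbc
    exact (intervalIntegral.integral_add_adjacent_intervals
      (hint x b hx hxb (by linarith)) (hint b c (lt_of_lt_of_le hx hxb) hbc (by linarith))).symm
  have hGanti : ∀ x b : ℝ, 0 < x → x ≤ b → b ≤ c → G b ≤ G x := by
    intro x b hx hxb hbc
    rw [hGsub x b hx hxb hbc]
    have hnn := intervalIntegral.integral_nonneg (μ := volume) (f := fun u => 1 / f u) hxb
      (fun u hu => le_of_lt (by
        have := fpos2c u (lt_of_lt_of_le hx hu.1) (by linarith [hu.2])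
        positivity))
    linarith
  have hcont1f : ContinuousOn (fun u => 1 / f u) (Ioo 0 (2 * c)) := fun u hu =>
    (continuousAt_const.div hfc.continuousAt (fpos2c u hu.1 hu.2.le).ne').continuousWithinAt
  have hGderiv : ∀ x : ℝ, 0 < x → x < c → HasDerivAt G (-(1 / f x)) x := by
    intro x hx hxc
    apply intervalIntegral.integral_hasDerivAt_left (hint x c hx hxc.le (by linarith))
    · exact ContinuousOn.stronglyMeasurableAtFilter isOpen_Ioo hcont1f x ⟨hx, by linarith⟩
    · exact continuousAt_const.div hfc.continuousAt (fpos2c x hx (by linarith)).ne'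
  set C₀ : ℝ := 2 / (1 - 2 / ρ) with hC₀_def
  have hρ0 : (0:ℝ) < ρ := by linarith
  have h2ρ : 2 / ρ < 1 := by rw [div_lt_one hρ0]; linarith
  have hC₀pos : 0 < C₀ := by rw [hC₀_def]; apply div_pos two_pos; linarith
  have hGbound : ∀ x : ℝ, 0 < x → x ≤ c → G x ≤ C₀ * (x / φ x) := by
    intro x hx hxc
    obtain ⟨n, hn⟩ := pow_unbounded_of_one_lt (c / x) (one_lt_two (α := ℝ))
    have hcx : c ≤ 2 ^ (n + 1) * x := by
      rw [div_lt_iff₀ hx] at hn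
      have h1 : (2:ℝ) ^ n ≤ 2 ^ (n + 1) := by
        apply pow_le_pow_right₀ one_le_two (Nat.le_succ n)
      have h2 := mul_le_mul_of_nonneg_right h1 hx.le
      linarith
    have hd := my_dyadic f φ hfc c ρ hcpos hρ2 hφmono hφ0
      (fun y hy hyc => hδ₁' y hy (lt_of_le_of_lt hyc hcδ₁))
      (fun u hu hu2 => hflb u hu (lt_of_le_of_lt hu2 hcδ₀)) n x hx hxc hcx
    have hsum := my_geom_le (r := 2 / ρ) (by positivity) h2ρ (n + 1)
    have hφx := φpos x hx
    calc G x ≤ (2 * x / φ x) * ∑ k ∈ Finset.range (n + 1), (2 / ρ) ^ k := hd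
      _ ≤ (2 * x / φ x) * (1 / (1 - 2 / ρ)) := by
          apply mul_le_mul_of_nonneg_left hsum (by positivity)
      _ = C₀ * (x / φ x) := by rw [hC₀_def]; field_simp
  -- Part 5 : sign of z
  have hγa : ∀ η : ℝ, 0 < η → ∀ᶠ t in atTop, |γ t| ≤ η * |z t| := by
    intro η hη
    have h1 := Metric.tendsto_nhds.1 hγF (η * (M / 2)) (by positivity)
    filter_upwards [h1, hFinv_pos, eventually_ge_atTop T₀] with t ha hb hcc
    have h4 := hlow t hcc
    rw [Real.dist_eq, sub_zero, abs_div, abs_of_pos hb, div_lt_iff₀ hb] at ha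
    have h5 := mul_le_mul_of_nonneg_left h4.le hη.le
    have h6 : η * (M / 2) * Finv t = η * (M / 2 * Finv t) := by ring
    linarith [h6 ▸ ha]
  have hbig : ∀ᶠ t in atTop, T ≤ t ∧ T₀ ≤ t ∧ 0 < Finv t ∧ |γ t| ≤ (1/4) * |z t| := by
    filter_upwards [eventually_ge_atTop T, eventually_ge_atTop T₀, hFinv_pos,
      hγa (1/4) (by norm_num)] with t h1 h2 h3 h4
    exact ⟨h1, h2, h3, h4⟩
  obtain ⟨T₁, hT₁⟩ := eventually_atTop.1 hbig
  have hapos : ∀ t ≥ T₁, 0 < |z t| := by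
    intro t ht
    obtain ⟨h1, h2, h3, h4⟩ := hT₁ t ht
    have h5 := hlow t h2
    have h6 := mul_pos (by linarith : (0:ℝ) < M / 2) h3
    linarith
  have hne : ∀ t ≥ T₁, z t ≠ 0 := fun t ht => abs_pos.1 (hapos t ht)
  have hcont : ∀ t ≥ T₁, ContinuousAt z t := fun t ht =>
    (hz t (hT₁ t ht).1).continuousAt
  obtain ⟨s, hs, hsz⟩ : ∃ s : ℝ, (s = 1 ∨ s = -1) ∧ ∀ t ≥ T₁, s * z t = |z t| := by
    rcases my_sign_const z T₁ hcont hne with hp | hn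
    · exact ⟨1, Or.inl rfl, fun t ht => by rw [one_mul, abs_of_pos (hp t ht)]⟩
    · exact ⟨-1, Or.inr rfl, fun t ht => by rw [abs_of_neg (hn t ht)]; ring⟩
  have habs : |s| = 1 := by rcases hs with h | h <;> simp [h]
  -- Part 6 : tendsto facts
  have hγ0 : Tendsto γ atTop (𝓝 0) := by
    have h := hγF.mul hFinv0
    rw [mul_zero] at h
    apply h.congr'
    filter_upwards [hFinv_pos] with t ht
    field_simp
  have ha0 : Tendsto (fun t => |z t|) atTop (𝓝[>] 0) := by
    rw [tendsto_nhdsWithin_iff]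
    constructor
    · have h := hz0.abs; rwa [abs_zero] at h
    · filter_upwards [eventually_ge_atTop T₁] with t ht
      exact hapos t ht
  have ha0' : Tendsto (fun t => |z t|) atTop (𝓝[≠] 0) :=
    ha0.mono_right (nhdsWithin_mono _ (fun x hx => ne_of_gt hx))
  have hzγne : ∀ t, T₁ ≤ t → z t + γ t ≠ 0 := by
    intro t ht
    obtain ⟨_, _, _, h4⟩ := hT₁ t ht
    have ha := hapos t ht
    intro hcon
    have : γ t = -z t := by linarith [hcon]
    rw [this, abs_neg] at h4
    linarith
  have hzγ : Tendsto (fun t => z t + γ t) atTop (𝓝[≠] 0) := by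
    rw [tendsto_nhdsWithin_iff]
    constructor
    · simpa using hz0.add hγ0
    · filter_upwards [eventually_ge_atTop T₁] with t ht
      simpa using hzγne t ht
  -- Part 7 : q → 1
  have hA : Tendsto (fun t => f (z t + γ t) / φ (z t + γ t)) atTop (𝓝 1) := hasym.comp hzγ
  have hC : Tendsto (fun t => φ (|z t|) / f (|z t|)) atTop (𝓝 1) := by
    have h := (hasym.comp ha0').inv₀ one_ne_zero
    rw [inv_one] at h
    apply h.congr
    intro t
    simp [Function.comp_def, inv_div]
  have hB : Tendsto (fun t => φ (s * (z t + γ t)) / φ (|z t|)) atTop (𝓝 1) := by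
    rw [Metric.tendsto_nhds]
    intro ε hε
    have hrc : Tendsto (fun x : ℝ => x ^ β) (𝓝 1) (𝓝 1) := by
      have h := (continuousAt_rpow_const 1 β (Or.inl one_ne_zero)).tendsto
      simpa using h
    obtain ⟨θ, hθpos, hθ⟩ := Metric.eventually_nhds_iff.1 (hrc.eventually
      (Metric.eventually_nhds_iff.2 ⟨ε/2, half_pos hε, fun {x} hx => hx⟩))
    set η : ℝ := min (θ/2) (1/2) with hη_def
    have hη0 : 0 < η := by positivity
    have hη2 : η ≤ 1/2 := min_le_right _ _
    have hηθ : η < θ := lt_of_le_of_lt (min_le_left _ _) (by linarith)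
    have h1η : (0:ℝ) < 1 + η := by linarith
    have h1η' : (0:ℝ) < 1 - η := by linarith
    have hp1 : dist ((1+η):ℝ) 1 < θ := by
      rw [Real.dist_eq]; rw [abs_of_pos (by linarith : (0:ℝ) < 1 + η - 1)]; simpa using hηθ
    have hp2 : dist ((1-η):ℝ) 1 < θ := by
      rw [Real.dist_eq]
      have : |1 - η - 1| = η := by rw [show (1:ℝ) - η - 1 = -η by ring, abs_neg, abs_of_pos hη0]
      rw [this]; exact hηθ
    have hβ1 : |((1+η):ℝ) ^ β - 1| < ε/2 := by
      have := hθ hp1; rwa [Real.dist_eq] at this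
    have hβ2 : |((1-η):ℝ) ^ β - 1| < ε/2 := by
      have := hθ hp2; rwa [Real.dist_eq] at this
    have hub := Metric.tendsto_nhds.1 ((hφrv (1+η) h1η).comp ha0) (ε/2) (half_pos hε)
    have hlb := Metric.tendsto_nhds.1 ((hφrv (1-η) h1η').comp ha0) (ε/2) (half_pos hε)
    filter_upwards [hub, hlb, hγa η hη0, eventually_ge_atTop T₁] with t h1 h2 h3 h5
    have ha := hapos t h5
    have hφa := φpos _ ha
    have hsγ : |s * γ t| = |γ t| := by rw [abs_mul, habs, one_mul]
    have hszr := hsz t h5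
    have hzu : s * (z t + γ t) ≤ (1+η) * |z t| := by
      have h6 : s * γ t ≤ |γ t| := hsγ ▸ le_abs_self _
      have h7 : s * (z t + γ t) = s * z t + s * γ t := by ring
      linarith [h3, hszr]
    have hzl : (1-η) * |z t| ≤ s * (z t + γ t) := by
      have h6 : -|γ t| ≤ s * γ t := hsγ ▸ neg_abs_le _
      have h7 : s * (z t + γ t) = s * z t + s * γ t := by ring
      linarith [h3, hszr]
    have hm1 := hφmono.monotone hzu
    have hm2 := hφmono.monotone hzl
    rw [Function.comp_def, Real.dist_eq] at h1 h2
    have hub' : φ ((1+η) * |z t|) / φ (|z t|) < 1 + ε := by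
      have := abs_lt.1 h1
      have := abs_lt.1 hβ1
      linarith
    have hlb' : 1 - ε < φ ((1-η) * |z t|) / φ (|z t|) := by
      have := abs_lt.1 h2
      have := abs_lt.1 hβ2
      linarith
    rw [Real.dist_eq]
    rw [abs_lt]
    constructor
    · have h7 : φ ((1-η) * |z t|) / φ (|z t|) ≤ φ (s * (z t + γ t)) / φ (|z t|) :=
        (div_le_div_iff_of_pos_right hφa).2 hm2
      linarith
    · have h8 : φ (s * (z t + γ t)) / φ (|z t|) ≤ φ ((1+η) * |z t|) / φ (|z t|) :=
        (div_le_div_iff_of_pos_right hφa).2 hm1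
      linarith
  have hq1 : Tendsto (fun t => s * f (z t + γ t) / f (|z t|)) atTop (𝓝 1) := by
    have hprod := hA.mul (hB.mul hC)
    rw [show ((1:ℝ) * (1 * 1)) = 1 by norm_num] at hprod
    apply hprod.congr'
    filter_upwards [eventually_ge_atTop T₁, (tendsto_nhdsWithin_iff.1 ha0).1.eventually_lt_const hδ₀pos]
      with t ht hlt
    have ha := hapos t ht
    have hzγn := hzγne t ht
    have hφzγ : φ (z t + γ t) ≠ 0 := φne _ hzγn
    have hφa : φ (|z t|) ≠ 0 := (φpos _ ha).ne'
    have hfa : f (|z t|) ≠ 0 := (fposd _ ha hlt).ne'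
    have hsφ : φ (s * (z t + γ t)) = s * φ (z t + γ t) := by
      rcases hs with h | h
      · rw [h, one_mul, one_mul]
      · rw [h]
        rw [show (-1 : ℝ) * (z t + γ t) = -(z t + γ t) by ring, hφodd]
        ring
    rw [hsφ]
    field_simp
  -- Part 8 : derivative of Ψ = G ∘ |z|
  have hΨd : ∀ᶠ t in atTop, HasDerivAt (fun u => G (|z u|))
      (s * f (z t + γ t) / f (|z t|)) t := by
    filter_upwards [eventually_ge_atTop (T₁ + 1), eventually_ge_atTop T,
      (tendsto_nhdsWithin_iff.1 ha0).1.eventually_lt_const hcpos] with t h1 h2 h3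
    have ht1 : T₁ ≤ t := by linarith
    have ha := hapos t ht1
    have hszr := hsz t ht1
    have hζ : HasDerivAt (fun u => s * z u) (s * -f (z t + γ t)) t := (hz t h2).const_mul s
    have hG1 : HasDerivAt G (-(1 / f (s * z t))) (s * z t) := by
      rw [hszr]
      exact hGderiv (|z t|) ha h3
    have hcomp := hG1.comp t hζ
    have heq : (fun u => G (|z u|)) =ᶠ[𝓝 t] (fun u => G (s * z u)) := by
      have hmem : Ioi T₁ ∈ 𝓝 t := isOpen_Ioi.mem_nhds (by simpa using lt_of_lt_of_le (by linarith) h1)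
      filter_upwards [hmem] with u hu
      rw [hsz u (le_of_lt hu)]
    have hd := hcomp.congr_of_eventuallyEq heq
    refine hd.congr_deriv ?_
    rw [hszr]
    have hfa : f (|z t|) ≠ 0 := (fposd _ ha (by
      have h4 : |z t| < c := h3
      linarith)).ne'
    field_simp
  -- Part 9 : linear growth of Ψ
  have hgrow : ∀ ε : ℝ, 0 < ε → ∃ Kl Ku : ℝ, ∀ᶠ t in atTop,
      ((1-ε)*t + Kl ≤ G (|z t|) ∧ G (|z t|) ≤ (1+ε)*t + Ku) := by
    intro ε hε
    have hqev : ∀ᶠ t in atTop, |s * f (z t + γ t) / f (|z t|) - 1| ≤ ε := by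
      have := Metric.tendsto_nhds.1 hq1 ε hε
      filter_upwards [this] with t h
      rw [Real.dist_eq] at h
      exact h.le
    obtain ⟨T₂, hT₂⟩ := eventually_atTop.1 (hΨd.and hqev)
    have hg := my_growth (fun u => G (|z u|)) (fun t => s * f (z t + γ t) / f (|z t|)) T₂ ε
      (fun t ht => (hT₂ t ht).1) (fun t ht => (hT₂ t ht).2)
    refine ⟨(1-ε)*(-T₂) + G (|z T₂|), (1+ε)*(-T₂) + G (|z T₂|), ?_⟩
    filter_upwards [eventually_ge_atTop T₂] with t ht
    obtain ⟨hg1, hg2⟩ := hg t ht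
    constructor
    · have e1 : (1-ε)*(t-T₂) + G (|z T₂|) = (1-ε)*t + ((1-ε)*(-T₂) + G (|z T₂|)) := by ring
      linarith [e1 ▸ hg1]
    · have e2 : (1+ε)*(t-T₂) + G (|z T₂|) = (1+ε)*t + ((1+ε)*(-T₂) + G (|z T₂|)) := by ring
      linarith [e2 ▸ hg2]
  -- Part 10 : G (Finv t) = t - t₁ eventually
  have hGg : ∀ᶠ t in atTop, G (Finv t) = t - t₁ := by
    filter_upwards [hFinv, hFinv_pos, hFinv0.eventually_lt_const hcpos] with t h1 h2 h3
    have := hGF (Finv t) h2 h3.le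
    rw [h1] at this
    linarith
  -- Part 11 : conclusion
  have hfinal : Tendsto (fun t => |z t| / Finv t) atTop (𝓝 1) := by
    rw [Metric.tendsto_nhds]
    intro δ hδ
    set d : ℝ := min (δ/2) (1/2) with hd_def
    have hd0 : 0 < d := by positivity
    have hd2 : d ≤ 1/2 := min_le_right _ _
    have hdδ : d < δ := lt_of_le_of_lt (min_le_left _ _) (by linarith)
    have hpd : (0:ℝ) < (1+d) ^ β := Real.rpow_pos_of_pos (by linarith) β
    have hrvev : ∀ᶠ t in atTop, φ ((1+d) * Finv t) / φ (Finv t) < 2*(1+d)^β := by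
      have hrv := Metric.tendsto_nhds.1 ((hφrv (1+d) (by linarith)).comp hgs) ((1+d)^β) hpd
      filter_upwards [hrv] with t h
      rw [Function.comp_def, Real.dist_eq] at h
      have := abs_lt.1 h
      linarith
    set ε : ℝ := d / (16 * (1+d)^β * C₀) with hε_def
    set ε' : ℝ := d / (8 * C₀) with hε'_def
    have hε0 : 0 < ε := by rw [hε_def]; positivity
    have hε'0 : 0 < ε' := by rw [hε'_def]; positivity
    set εm : ℝ := min ε ε' with hεm_def
    have hεm0 : 0 < εm := lt_min hε0 hε'0
    obtain ⟨Kl, Ku, hK⟩ := hgrow εm hεm0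
    filter_upwards [hFinv_pos, hFinv0.eventually_lt_const (by positivity : (0:ℝ) < c/2),
      (tendsto_nhdsWithin_iff.1 ha0).1.eventually_lt_const (by positivity : (0:ℝ) < c/2),
      eventually_ge_atTop T₁, hGg, hK, hrvev, eventually_ge_atTop (2*t₁),
      eventually_gt_atTop ((-t₁ - Kl)/εm), eventually_gt_atTop ((t₁ + Ku)/εm),
      eventually_ge_atTop (0:ℝ)]
      with t hg0 hgc hac htT₁ hGgt hKt hrvt h2t₁ hbd1 hbd2 ht0
    have ha := hapos t htT₁
    have hφg := φpos _ hg0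
    have hgφratio : (t - t₁)/C₀ ≤ Finv t / φ (Finv t) := by
      have hb := hGbound (Finv t) hg0 (by linarith)
      rw [hGgt] at hb
      rw [div_le_iff₀ hC₀pos]
      linarith [hb]
    have htt₁ : t/2 ≤ t - t₁ := by linarith [h2t₁]
    have hεmε : εm ≤ ε := min_le_left _ _
    have hεmε' : εm ≤ ε' := min_le_right _ _
    -- upper bound : |z t| < (1+d) * Finv t
    have hup : |z t| < (1+d) * Finv t := by
      by_contra hcon
      push_neg at hcon
      have h1dg : 0 < (1+d) * Finv t := by positivity
      have hdg0 : 0 ≤ d * Finv t := mul_nonneg hd0.le hg0.le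
      have h1dgc : (1+d) * Finv t ≤ c := by
        have hmm : (1+d) * Finv t ≤ (3/2) * (c/2) :=
          mul_le_mul (by linarith) hgc.le hg0.le (by norm_num)
        linarith
      have hsub := hGsub (Finv t) ((1+d) * Finv t) hg0 (by linarith) h1dgc
      have hanti := hGanti ((1+d) * Finv t) (|z t|) h1dg hcon (by linarith)
      -- lower bound on the middle integral
      have hφ1dg := φpos _ h1dg
      have hIlb : d * Finv t * (1/(2*φ ((1+d) * Finv t))) ≤
          ∫ u in (Finv t)..((1+d) * Finv t), 1 / f u := by
        have hmono := intervalIntegral.integral_mono_on (μ := volume) (by linarith)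
          (intervalIntegrable_const (c := 1/(2*φ ((1+d) * Finv t))))
          (hint (Finv t) ((1+d) * Finv t) hg0 (by linarith) (by linarith))
          (fun u hu => by
            have hu0 : 0 < u := lt_of_lt_of_le hg0 hu.1
            have hu2 : u ≤ 2*c := by linarith [hu.2]
            have hfu := fpos2c u hu0 hu2
            have hfub' := hfub u hu0 (lt_of_le_of_lt hu2 hcδ₀)
            have hφu := hφmono.monotone hu.2
            rw [div_le_div_iff₀ (by positivity) hfu]
            linarith)
        calc d * Finv t * (1/(2*φ ((1+d) * Finv t)))
            = ∫ _ in (Finv t)..((1+d) * Finv t), (1/(2*φ ((1+d) * Finv t))) := by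
              rw [intervalIntegral.integral_const, smul_eq_mul]; ring
          _ ≤ _ := hmono
      have hφr : φ ((1+d) * Finv t) ≤ 2*(1+d)^β * φ (Finv t) := by
        rw [div_lt_iff₀ hφg] at hrvt
        linarith
      have hIlb2 : 4*εm*(t - t₁) ≤ ∫ u in (Finv t)..((1+d) * Finv t), 1 / f u := by
        have step1 : d * Finv t * (1/(2*(2*(1+d)^β * φ (Finv t)))) ≤
            d * Finv t * (1/(2*φ ((1+d) * Finv t))) := by
          apply mul_le_mul_of_nonneg_left _ (by positivity)
          apply one_div_le_one_div_of_le (by positivity)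
          linarith
        have step2 : 4*ε*(t-t₁) ≤ d * Finv t * (1/(2*(2*(1+d)^β * φ (Finv t)))) := by
          have e1 : d * Finv t * (1/(2*(2*(1+d)^β * φ (Finv t))))
              = (d/(4*(1+d)^β)) * (Finv t / φ (Finv t)) := by
            field_simp
            ring
          have e2 : (4:ℝ)*ε = (d/(4*(1+d)^β)) * (1/C₀) := by
            rw [hε_def]
            field_simp
            ring
          rw [e1, e2]
          have h4 : (0:ℝ) < d/(4*(1+d)^β) := by positivity
          calc (d/(4*(1+d)^β)) * (1/C₀) * (t-t₁)
              = (d/(4*(1+d)^β)) * ((t-t₁)/C₀) := by ring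
            _ ≤ (d/(4*(1+d)^β)) * (Finv t / φ (Finv t)) :=
                mul_le_mul_of_nonneg_left hgφratio h4.le
        have step3 : 4*εm*(t-t₁) ≤ 4*ε*(t-t₁) :=
          mul_le_mul_of_nonneg_right (by linarith) (by linarith)
        linarith
      have hΨub : G (|z t|) ≤ t - t₁ - 4*εm*(t-t₁) := by
        rw [hGgt] at hsub
        linarith
      have hΨlb := hKt.1
      have hmul : 2*(εm*t) ≤ 4*εm*(t-t₁) := by
        have h9 := mul_nonneg hεm0.le (show (0:ℝ) ≤ t - 2*t₁ by linarith)
        linarith [h9]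
      have hεmt : -t₁ - Kl < t * εm := (div_lt_iff₀ hεm0).1 hbd1
      linarith [hΨlb, hΨub, hmul, hεmt]
    -- lower bound : (1-d) * Finv t < |z t|
    have hlo : (1-d) * Finv t < |z t| := by
      by_contra hcon
      push_neg at hcon
      have h1d' : (0:ℝ) < 1 - d := by linarith
      have h1dg : 0 < (1-d) * Finv t := by positivity
      have hdg0 : 0 ≤ d * Finv t := mul_nonneg hd0.le hg0.le
      have hsub := hGsub ((1-d) * Finv t) (Finv t) h1dg (by linarith) (by linarith)
      have hanti := hGanti (|z t|) ((1-d) * Finv t) ha hcon (by linarith)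
      have hIlb : d * Finv t * (1/(2*φ (Finv t))) ≤
          ∫ u in ((1-d) * Finv t)..(Finv t), 1 / f u := by
        have hmono := intervalIntegral.integral_mono_on (μ := volume) (by linarith)
          (intervalIntegrable_const (c := 1/(2*φ (Finv t))))
          (hint ((1-d) * Finv t) (Finv t) h1dg (by linarith) (by linarith))
          (fun u hu => by
            have hu0 : 0 < u := lt_of_lt_of_le h1dg hu.1
            have hu2 : u ≤ 2*c := by linarith [hu.2]
            have hfu := fpos2c u hu0 hu2
            have hfub' := hfub u hu0 (lt_of_le_of_lt hu2 hcδ₀)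
            have hφu := hφmono.monotone hu.2
            rw [div_le_div_iff₀ (by positivity) hfu]
            linarith)
        calc d * Finv t * (1/(2*φ (Finv t)))
            = ∫ _ in ((1-d) * Finv t)..(Finv t), (1/(2*φ (Finv t))) := by
              rw [intervalIntegral.integral_const, smul_eq_mul]; ring
          _ ≤ _ := hmono
      have hIlb2 : 4*εm*(t - t₁) ≤ ∫ u in ((1-d) * Finv t)..(Finv t), 1 / f u := by
        have e1 : d * Finv t * (1/(2*φ (Finv t))) = (d/2) * (Finv t / φ (Finv t)) := by
          field_simp; try ring
        have e2 : (4:ℝ)*ε' = (d/2) * (1/C₀) := by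
          rw [hε'_def]; field_simp; try ring
        have step2 : 4*ε'*(t-t₁) ≤ d * Finv t * (1/(2*φ (Finv t))) := by
          rw [e1, e2]
          calc (d/2) * (1/C₀) * (t-t₁) = (d/2) * ((t-t₁)/C₀) := by ring
            _ ≤ (d/2) * (Finv t / φ (Finv t)) :=
                mul_le_mul_of_nonneg_left hgφratio (by positivity)
        have step3 : 4*εm*(t-t₁) ≤ 4*ε'*(t-t₁) :=
          mul_le_mul_of_nonneg_right (by linarith) (by linarith)
        linarith
      have hΨlb : t - t₁ + 4*εm*(t-t₁) ≤ G (|z t|) := by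
        rw [hGgt] at hsub
        linarith
      have hΨub := hKt.2
      have hmul : 2*(εm*t) ≤ 4*εm*(t-t₁) := by
        have h9 := mul_nonneg hεm0.le (show (0:ℝ) ≤ t - 2*t₁ by linarith)
        linarith [h9]
      have hεmt : t₁ + Ku < t * εm := (div_lt_iff₀ hεm0).1 hbd2
      linarith [hΨlb, hΨub, hmul, hεmt]
    -- combine
    rw [Real.dist_eq, abs_lt]
    have h1 : |z t| / Finv t < 1 + d := by
      rw [div_lt_iff₀ hg0]
      linarith
    have h2 : 1 - d < |z t| / Finv t := by
      rw [lt_div_iff₀ hg0]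
      linarith
    constructor <;> linarith
  exact ⟨hfinal, Or.inr hfinal.liminf_eq⟩
end
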